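/- arXiv:math/0603561 — 4 statements merged into one kernel-verified Lean document; each statement's English description precedes it below -/
import Mathlib

section
/- For n ≥ 1, the minimum of two adjacent uniform spacings satisfies min{S_1^n, S_2^n} equal in distribution to S_1^n / 2. -/
open MeasureTheory

/-- The law of `n` i.i.d. uniform points on `(0,1)`. -/
noncomputable def unif (n : ℕ) : Measure (Fin n → ℝ) :=
  Measure.pi fun _ => volume.restrict (Set.Ioo (0:ℝ) 1)

/-- Order statistics of a tuple of reals. -/
noncomputable def ostat {n : ℕ} (u : Fin n → ℝ) : Fin n → ℝ :=
  u ∘ Tuple.sort u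

/-- The spacings: `spacing u j` is the paper's `S_{j+1}^n`, i.e. `U_{(j+1)} - U_{(j)}`
with boundary conventions `U_{(0)} = 0`, `U_{(n+1)} = 1`. -/
noncomputable def spacing {n : ℕ} (u : Fin n → ℝ) (j : Fin (n+1)) : ℝ :=
  (if h : (j : ℕ) < n then ostat u ⟨j, h⟩ else 1) -
  (if h : 0 < (j : ℕ) then ostat u ⟨(j : ℕ) - 1, by have := j.isLt; omega⟩ else 0)

open Set
open scoped ENNReal

lemma ostat_mono {n : ℕ} (u : Fin n → ℝ) : Monotone (ostat u) := Tuple.monotone_sort u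

lemma ostat_apply_symm {n : ℕ} (u : Fin n → ℝ) (i : Fin n) :
    ostat u ((Tuple.sort u).symm i) = u i := by
  simp [ostat]

lemma ostat_zero_le {n : ℕ} (u : Fin (n+1) → ℝ) (i : Fin (n+1)) : ostat u 0 ≤ u i := by
  rw [← ostat_apply_symm u i]
  exact ostat_mono u (Fin.zero_le _)

lemma ostat_zero_eq_inf' {n : ℕ} (u : Fin (n+1) → ℝ) :
    ostat u 0 = Finset.univ.inf' ⟨0, Finset.mem_univ 0⟩ u := by
  apply le_antisymm
  · exact Finset.le_inf' _ _ fun i _ => ostat_zero_le u i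
  · exact Finset.inf'_le _ (Finset.mem_univ (Tuple.sort u 0))

lemma ostat_one_le {n : ℕ} (u : Fin (n+2) → ℝ) (j : Fin (n+2)) (hj : j ≠ Tuple.sort u 0) :
    ostat u 1 ≤ u j := by
  rw [← ostat_apply_symm u j]
  apply ostat_mono u
  have : (Tuple.sort u).symm j ≠ 0 := by
    intro h
    apply hj
    rw [← h]; simp
  rw [Fin.le_def, Fin.val_one, Nat.one_le_iff_ne_zero]
  exact fun h => this (Fin.ext (by simp only [Fin.val_zero]; exact h))


lemma key_event {n : ℕ} (u : Fin (n+2) → ℝ) (r : ℝ) (hr : 0 ≤ r) :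
    (r < ostat u 0 ∧ r < ostat u 1 - ostat u 0) ↔
      ∃ a, r < u a ∧ ∀ j ≠ a, u a + r < u j := by
  constructor
  · rintro ⟨h1, h2⟩
    refine ⟨Tuple.sort u 0, h1, fun j hj => ?_⟩
    have := ostat_one_le u j hj
    have : ostat u 0 + r < ostat u 1 := by linarith
    calc u (Tuple.sort u 0) + r = ostat u 0 + r := rfl
    _ < ostat u 1 := this
    _ ≤ u j := ostat_one_le u j hj
  · rintro ⟨a, ha1, ha2⟩
    have hmin : ostat u 0 = u a := by
      rcases eq_or_ne (Tuple.sort u 0) a with h | h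
      · rw [show ostat u 0 = u (Tuple.sort u 0) from rfl, h]
      · exfalso
        have h1 := ha2 _ h
        have h2 := ostat_zero_le u a
        have : ostat u 0 = u (Tuple.sort u 0) := rfl
        linarith
    have hne : Tuple.sort u 1 ≠ a := by
      intro h
      have hne0 : Tuple.sort u 0 ≠ a := by
        intro h0
        have := (Tuple.sort u).injective (h0.trans h.symm)
        simp at this
      have h1 := ha2 _ hne0
      have h2 : ostat u 0 ≤ ostat u 1 := ostat_mono u (by norm_num [Fin.le_def])
      have e0 : ostat u 0 = u (Tuple.sort u 0) := rfl
      have e1 : ostat u 1 = u (Tuple.sort u 1) := rfl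
      rw [h] at e1
      linarith
    have h2 : u a + r < ostat u 1 := by
      have : ostat u 1 = u (Tuple.sort u 1) := rfl
      rw [this]
      exact ha2 _ hne
    constructor
    · rw [hmin]; exact ha1
    · rw [hmin]; linarith

lemma offDiag_nonempty {n : ℕ} : (Finset.univ.offDiag : Finset (Fin (n+2) × Fin (n+2))).Nonempty := by
  refine ⟨(0, 1), ?_⟩
  simp [Finset.mem_offDiag]

lemma ostat_one_eq_inf' {n : ℕ} (u : Fin (n+2) → ℝ) :
    ostat u 1 = Finset.inf' _ offDiag_nonempty (fun p => max (u p.1) (u p.2)) := by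
  apply le_antisymm
  · apply Finset.le_inf'
    rintro ⟨i, j⟩ hp
    rw [Finset.mem_offDiag] at hp
    have hij : i ≠ j := hp.2.2
    set k := (Tuple.sort u).symm i
    set l := (Tuple.sort u).symm j
    have hkl : k ≠ l := fun h => hij ((Tuple.sort u).symm.injective h)
    have h1 : (1 : Fin (n+2)) ≤ max k l := by
      rw [Fin.le_def, Fin.val_one]
      rcases Nat.eq_zero_or_pos (max k l : ℕ) with h | h
      · exfalso
        have hk : (k : ℕ) = 0 := by
          have := le_max_left k l; rw [Fin.le_def] at this; omega
        have hl : (l : ℕ) = 0 := by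
          have := le_max_right k l; rw [Fin.le_def] at this; omega
        exact hkl (Fin.ext (hk.trans hl.symm))
      · exact h
    calc ostat u 1 ≤ ostat u (max k l) := ostat_mono u h1
    _ = max (ostat u k) (ostat u l) := (ostat_mono u).map_max
    _ = max (u i) (u j) := by rw [ostat_apply_symm, ostat_apply_symm]
  · have hmem : ((Tuple.sort u 0, Tuple.sort u 1) : Fin (n+2) × Fin (n+2)) ∈
        Finset.univ.offDiag := by
      rw [Finset.mem_offDiag]
      refine ⟨Finset.mem_univ _, Finset.mem_univ _, fun h => ?_⟩
      have := (Tuple.sort u).injective h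
      simp at this
    refine le_trans (Finset.inf'_le _ hmem) ?_
    have : ostat u 0 ≤ ostat u 1 := ostat_mono u (by rw [Fin.le_def]; norm_num)
    simp only []
    rw [show u (Tuple.sort u 0) = ostat u 0 from rfl, show u (Tuple.sort u 1) = ostat u 1 from rfl]
    exact max_le this le_rfl

lemma measurable_ostat_zero {n : ℕ} : Measurable (fun u : Fin (n+1) → ℝ => ostat u 0) := by
  simp only [ostat_zero_eq_inf']
  exact (Continuous.finset_inf'_apply _ fun i _ => continuous_apply i).measurable

lemma measurable_ostat_one {n : ℕ} : Measurable (fun u : Fin (n+2) → ℝ => ostat u 1) := by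
  simp only [ostat_one_eq_inf']
  refine (Continuous.finset_inf'_apply _ fun p _ => ?_).measurable
  exact Continuous.max (continuous_apply p.1) (continuous_apply p.2)

noncomputable def nu : Measure ℝ := volume.restrict (Set.Ioo (0:ℝ) 1)

instance : IsProbabilityMeasure nu := by
  constructor
  rw [nu, Measure.restrict_apply MeasurableSet.univ, univ_inter, Real.volume_Ioo]
  norm_num

lemma nu_Ioi {s : ℝ} (hs : 0 ≤ s) : nu (Ioi s) = ENNReal.ofReal (1 - s) := by
  rw [nu, Measure.restrict_apply measurableSet_Ioi]
  have : Ioi s ∩ Ioo 0 1 = Ioo s 1 := by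
    ext x; simp only [mem_inter_iff, mem_Ioi, mem_Ioo]
    constructor
    · rintro ⟨h1, h2, h3⟩; exact ⟨h1, h3⟩
    · rintro ⟨h1, h2⟩; exact ⟨h1, lt_of_le_of_lt hs h1, h2⟩
  rw [this, Real.volume_Ioo]

lemma key_integral (m : ℕ) (r : ℝ) (hr0 : 0 ≤ r) (hr1 : r ≤ 1/2) :
    ∫⁻ t in Ioo (0:ℝ) 1, (Ioi r).indicator
        (fun t => (ENNReal.ofReal (1 - t - r))^(m+1)) t
      = ENNReal.ofReal ((1-2*r)^(m+2) / (m+2)) := by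
  rw [lintegral_indicator measurableSet_Ioi _, Measure.restrict_restrict measurableSet_Ioi]
  have h1 : Ioi r ∩ Ioo (0:ℝ) 1 = Ioo r 1 := by
    ext x; simp only [mem_inter_iff, mem_Ioi, mem_Ioo]
    constructor
    · rintro ⟨a, b, c⟩; exact ⟨a, c⟩
    · rintro ⟨a, b⟩; exact ⟨a, lt_of_le_of_lt hr0 a, b⟩
  rw [h1]
  have hind : ∀ t ∈ Ioo r 1, (ENNReal.ofReal (1 - t - r))^(m+1)
      = (Ioo r (1-r)).indicator (fun t => (ENNReal.ofReal (1 - t - r))^(m+1)) t := by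
    intro t ht
    rcases lt_or_ge t (1-r) with h | h
    · rw [indicator_of_mem (show t ∈ Ioo r (1-r) from ⟨ht.1, h⟩)]
    · rw [indicator_of_notMem (fun hm => absurd hm.2 (not_lt.mpr h))]
      have : 1 - t - r ≤ 0 := by linarith
      simp [ENNReal.ofReal_eq_zero.mpr this]
  rw [setLIntegral_congr_fun measurableSet_Ioo hind,
    lintegral_indicator measurableSet_Ioo, Measure.restrict_restrict measurableSet_Ioo,
    show Ioo r (1-r) ∩ Ioo r 1 = Ioo r (1-r) from
      inter_eq_left.mpr (Ioo_subset_Ioo le_rfl (by linarith))]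
  have h3 : ∀ t ∈ Ioo r (1-r), (ENNReal.ofReal (1 - t - r))^(m+1)
      = ENNReal.ofReal ((1 - t - r)^(m+1)) := by
    intro t ht
    rw [← ENNReal.ofReal_pow]
    rcases ht with ⟨a, b⟩; linarith
  rw [setLIntegral_congr_fun measurableSet_Ioo h3]
  rw [← ofReal_integral_eq_lintegral_ofReal]
  · congr 1
    rw [← MeasureTheory.integral_Ioc_eq_integral_Ioo,
      ← intervalIntegral.integral_of_le (by linarith)]
    have := intervalIntegral.integral_comp_sub_left (a := r) (b := 1-r)
      (fun t => t^(m+1)) (1-r)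
    rw [show (fun t => (1 - t - r)^(m+1)) = (fun t => (1 - r - t)^(m+1)) from by
      funext t; ring_nf]
    rw [this]
    rw [show (1:ℝ) - r - (1 - r) = 0 from by ring, show (1:ℝ) - r - r = 1 - 2*r from by ring]
    rw [integral_pow]
    push_cast
    ring_nf
  · exact (Continuous.integrableOn_Icc (by continuity)).mono_set Ioo_subset_Icc_self
  · filter_upwards [self_mem_ae_restrict measurableSet_Ioo] with t ht
    rcases ht with ⟨a, b⟩
    have : (0:ℝ) ≤ 1 - t - r := by linarith
    positivity

lemma measure_A (m : ℕ) (r : ℝ) (hr0 : 0 ≤ r) (hr1 : r ≤ 1/2) (a : Fin (m+2)) :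
    Measure.pi (fun _ : Fin (m+2) => nu) {u | r < u a ∧ ∀ j, j ≠ a → u a + r < u j}
      = ENNReal.ofReal ((1-2*r)^(m+2) / (m+2)) := by
  set e := MeasurableEquiv.piFinSuccAbove (fun _ : Fin (m+2) => ℝ) a with he
  have MP := measurePreserving_piFinSuccAbove (fun _ : Fin (m+2) => nu) a
  set B : Set (ℝ × (Fin (m+1) → ℝ)) := {p | r < p.1 ∧ ∀ j, p.1 + r < p.2 j} with hB
  have hBmeas : MeasurableSet B := by
    have h1 : MeasurableSet {p : ℝ × (Fin (m+1) → ℝ) | r < p.1} :=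
      measurable_fst measurableSet_Ioi
    have h2 : MeasurableSet {p : ℝ × (Fin (m+1) → ℝ) | ∀ j, p.1 + r < p.2 j} := by
      rw [show {p : ℝ × (Fin (m+1) → ℝ) | ∀ j, p.1 + r < p.2 j}
        = ⋂ j, {p : ℝ × (Fin (m+1) → ℝ) | p.1 + r < p.2 j} from by ext p; simp]
      apply MeasurableSet.iInter
      intro j
      exact measurableSet_lt (measurable_fst.add_const r)
        ((measurable_pi_apply j).comp measurable_snd)
    exact h1.inter h2
  have hpre : {u : Fin (m+2) → ℝ | r < u a ∧ ∀ j, j ≠ a → u a + r < u j} = e ⁻¹' B := by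
    ext u
    simp only [mem_preimage, hB, mem_setOf_eq, he, MeasurableEquiv.piFinSuccAbove_apply]
    constructor
    · rintro ⟨h1, h2⟩
      exact ⟨h1, fun j => h2 _ (Fin.succAbove_ne a j)⟩
    · rintro ⟨h1, h2⟩
      refine ⟨h1, fun j hj => ?_⟩
      obtain ⟨k, rfl⟩ := Fin.exists_succAbove_eq hj
      exact h2 k
  rw [hpre, MP.measure_preimage hBmeas.nullMeasurableSet,
    Measure.prod_apply hBmeas]
  have hfib : ∀ t : ℝ, (Measure.pi fun _ : Fin (m+1) => nu) (Prod.mk t ⁻¹' B)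
      = (Ioi r).indicator (fun t => (nu (Ioi (t+r)))^(m+1)) t := by
    intro t
    rcases lt_or_ge r t with h | h
    · rw [indicator_of_mem (show t ∈ Ioi r from h)]
      have : Prod.mk t ⁻¹' B = univ.pi (fun _ : Fin (m+1) => Ioi (t + r)) := by
        ext w
        simp only [mem_preimage, hB, mem_setOf_eq, mem_univ_pi, mem_Ioi]
        exact ⟨fun hw j => hw.2 j, fun hw => ⟨h, hw⟩⟩
      rw [this, Measure.pi_pi, Finset.prod_const, Finset.card_univ, Fintype.card_fin]
    · rw [indicator_of_notMem (by simpa using h)]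
      have : Prod.mk t ⁻¹' B = ∅ := by
        ext w
        simp only [mem_preimage, hB, mem_setOf_eq, mem_empty_iff_false, iff_false]
        rintro ⟨h1, -⟩
        exact absurd h1 (not_lt.mpr h)
      rw [this, measure_empty]
  simp only [hfib]
  have : ∫⁻ t, (Ioi r).indicator (fun t => (nu (Ioi (t+r)))^(m+1)) t ∂nu
      = ∫⁻ t in Ioo (0:ℝ) 1, (Ioi r).indicator
        (fun t => (ENNReal.ofReal (1 - t - r))^(m+1)) t := by
    rw [nu]
    apply setLIntegral_congr_fun measurableSet_Ioo
    intro t ht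
    rcases lt_or_ge r t with h | h
    · rw [indicator_of_mem (show t ∈ Ioi r from h), indicator_of_mem (show t ∈ Ioi r from h)]
      have hnu : (volume.restrict (Ioo (0:ℝ) 1)) (Ioi (t + r)) = ENNReal.ofReal (1 - t - r) := by
        have h' := nu_Ioi (s := t + r) (by linarith [ht.1])
        rw [nu] at h'
        rw [h', show 1 - (t + r) = 1 - t - r from by ring]
      rw [hnu]
    · rw [indicator_of_notMem (by simpa using h), indicator_of_notMem (by simpa using h)]
  rw [this, key_integral m r hr0 hr1]

lemma lt_ostat_zero_iff {n : ℕ} (u : Fin (n+1) → ℝ) (c : ℝ) :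
    c < ostat u 0 ↔ ∀ i, c < u i :=
  ⟨fun h i => lt_of_lt_of_le h (ostat_zero_le u i), fun h => h (Tuple.sort u 0)⟩

lemma spacing_zero {m : ℕ} (u : Fin (m+1) → ℝ) : spacing u 0 = ostat u 0 := by
  rw [spacing]
  norm_num

lemma spacing_one {m : ℕ} (u : Fin (m+2) → ℝ) : spacing u 1 = ostat u 1 - ostat u 0 := by
  rw [spacing]
  have hc1 : ((1 : Fin (m+3)) : ℕ) < m+2 := by simp
  have hc2 : 0 < ((1 : Fin (m+3)) : ℕ) := by simp
  rw [dif_pos hc1, dif_pos hc2]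
  congr 1 <;> · congr 1; apply Fin.ext; simp

lemma spacing_one' (u : Fin 1 → ℝ) : spacing u 1 = 1 - u 0 := by
  rw [spacing]
  have hc2 : 0 < ((1 : Fin 2) : ℕ) := by simp
  rw [dif_neg (by simp), dif_pos hc2]
  congr 1
  show ostat u _ = u 0
  rw [ostat]
  simp only [Function.comp_apply]
  congr 1
  apply Subsingleton.elim

def G (n : ℕ) : Set (Fin n → ℝ) := Set.univ.pi fun _ => Ioo (0:ℝ) 1

lemma G_measurable (n : ℕ) : MeasurableSet (G n) :=
  MeasurableSet.univ_pi fun _ => measurableSet_Ioo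

lemma unif_G (n : ℕ) : Measure.pi (fun _ : Fin n => nu) (G n) = 1 := by
  rw [G, Measure.pi_pi]
  have : nu (Ioo 0 1) = 1 := by
    rw [nu, Measure.restrict_apply measurableSet_Ioo, inter_self, Real.volume_Ioo]
    norm_num
  simp [this]

lemma unif_G_compl (n : ℕ) : Measure.pi (fun _ : Fin n => nu) (G n)ᶜ = 0 := by
  have h := measure_compl (μ := Measure.pi (fun _ : Fin n => nu)) (G_measurable n)
    (measure_ne_top _ _)
  rw [unif_G, measure_univ] at h
  simpa using h

lemma claim_two (m : ℕ) (r : ℝ) :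
    Measure.pi (fun _ : Fin (m+2) => nu) {u | r < ostat u 0 ∧ r < ostat u 1 - ostat u 0}
      = Measure.pi (fun _ : Fin (m+2) => nu) {u | r < ostat u 0 / 2} := by
  set μ := Measure.pi (fun _ : Fin (m+2) => nu) with hμ
  rcases lt_or_ge r 0 with hr | hr0
  · have h1 : G (m+2) ⊆ {u | r < ostat u 0 ∧ r < ostat u 1 - ostat u 0} := by
      intro u hu
      have h0 : (0:ℝ) < ostat u 0 := (hu (Tuple.sort u 0) (mem_univ _)).1
      have hmono : ostat u 0 ≤ ostat u 1 := ostat_mono u (by rw [Fin.le_def]; norm_num)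
      exact ⟨by linarith, by linarith⟩
    have h2 : G (m+2) ⊆ {u | r < ostat u 0 / 2} := by
      intro u hu
      have h0 : (0:ℝ) < ostat u 0 := (hu (Tuple.sort u 0) (mem_univ _)).1
      simp only [mem_setOf_eq]
      linarith
    have e1 : ∀ S : Set (Fin (m+2) → ℝ), G (m+2) ⊆ S → μ S = 1 := fun S hS =>
      le_antisymm prob_le_one (by rw [← unif_G (m+2)]; exact measure_mono hS)
    rw [e1 _ h1, e1 _ h2]
  rcases le_or_gt r (1/2) with hr1 | hr1
  · -- main case
    have hL : {u : Fin (m+2) → ℝ | r < ostat u 0 ∧ r < ostat u 1 - ostat u 0}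
        = ⋃ a, {u : Fin (m+2) → ℝ | r < u a ∧ ∀ j, j ≠ a → u a + r < u j} := by
      ext u
      simp only [mem_setOf_eq, mem_iUnion]
      exact key_event u r hr0
    have hmeasA : ∀ a : Fin (m+2),
        MeasurableSet {u : Fin (m+2) → ℝ | r < u a ∧ ∀ j, j ≠ a → u a + r < u j} := by
      intro a
      have h1 : MeasurableSet {u : Fin (m+2) → ℝ | r < u a} :=
        measurable_pi_apply a measurableSet_Ioi
      have h2 : MeasurableSet {u : Fin (m+2) → ℝ | ∀ j, j ≠ a → u a + r < u j} := by
        rw [show {u : Fin (m+2) → ℝ | ∀ j, j ≠ a → u a + r < u j}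
          = ⋂ j, ⋂ (_ : j ≠ a), {u : Fin (m+2) → ℝ | u a + r < u j} from by ext u; simp]
        exact MeasurableSet.iInter fun j => MeasurableSet.iInter fun _ =>
          measurableSet_lt (by fun_prop) (measurable_pi_apply j)
      exact h1.inter h2
    have hdisj : Pairwise (Function.onFun Disjoint
        (fun a => {u : Fin (m+2) → ℝ | r < u a ∧ ∀ j, j ≠ a → u a + r < u j})) := by
      intro a b hab
      rw [Function.onFun, Set.disjoint_left]
      rintro u ⟨h1a, h2a⟩ ⟨h1b, h2b⟩
      have hA := h2a b (Ne.symm hab)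
      have hB := h2b a hab
      linarith
    rw [hL, measure_iUnion hdisj hmeasA]
    have hval : ∀ a : Fin (m+2),
        μ {u : Fin (m+2) → ℝ | r < u a ∧ ∀ j, j ≠ a → u a + r < u j}
          = ENNReal.ofReal ((1-2*r)^(m+2) / (m+2)) := fun a => measure_A m r hr0 hr1 a
    rw [tsum_fintype]
    simp only [hval]
    rw [Finset.sum_const, Finset.card_univ, Fintype.card_fin, nsmul_eq_mul]
    have hconv : ((m+2 : ℕ) : ℝ≥0∞) * ENNReal.ofReal ((1-2*r)^(m+2)/(m+2))
        = ENNReal.ofReal ((1-2*r)^(m+2)) := by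
      rw [show ((m+2:ℕ):ℝ≥0∞) = ENNReal.ofReal ((m+2:ℕ):ℝ) from (ENNReal.ofReal_natCast _).symm,
        ← ENNReal.ofReal_mul (by positivity)]
      congr 1
      have hne : ((m:ℝ)+2) ≠ 0 := by positivity
      push_cast
      field_simp
    rw [hconv]
    have hR : {u : Fin (m+2) → ℝ | r < ostat u 0 / 2}
        = Set.univ.pi fun _ : Fin (m+2) => Ioi (2*r) := by
      ext u
      simp only [mem_setOf_eq, mem_univ_pi, mem_Ioi]
      rw [lt_div_iff₀ (by norm_num : (0:ℝ) < 2), show r * 2 = 2 * r from by ring,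
        lt_ostat_zero_iff]
    rw [hμ, hR, Measure.pi_pi]
    rw [Finset.prod_const, Finset.card_univ, Fintype.card_fin]
    rw [nu_Ioi (by linarith), ← ENNReal.ofReal_pow (by linarith)]
  · -- r > 1/2 : both measure zero
    have h1 : {u : Fin (m+2) → ℝ | r < ostat u 0 ∧ r < ostat u 1 - ostat u 0} ⊆ (G (m+2))ᶜ := by
      intro u hu hG
      have hlt : ostat u 1 < 1 := (hG (Tuple.sort u 1) (mem_univ _)).2
      rcases hu with ⟨a, b⟩
      linarith
    have h2 : {u : Fin (m+2) → ℝ | r < ostat u 0 / 2} ⊆ (G (m+2))ᶜ := by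
      intro u hu hG
      have hlt : ostat u 0 < 1 := (hG (Tuple.sort u 0) (mem_univ _)).2
      simp only [mem_setOf_eq] at hu
      linarith
    have e1 : ∀ S : Set (Fin (m+2) → ℝ), S ⊆ (G (m+2))ᶜ → μ S = 0 := fun S hS =>
      le_antisymm (le_trans (measure_mono hS) (le_of_eq (unif_G_compl (m+2)))) (by positivity)
    rw [e1 _ h1, e1 _ h2]

lemma claim_one (r : ℝ) :
    Measure.pi (fun _ : Fin 1 => nu) {u | r < min (u 0) (1 - u 0)}
      = Measure.pi (fun _ : Fin 1 => nu) {u | r < u 0 / 2} := by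
  have hL : {u : Fin 1 → ℝ | r < min (u 0) (1 - u 0)}
      = Set.univ.pi fun _ : Fin 1 => {x : ℝ | r < min x (1-x)} := by
    ext u
    simp only [mem_setOf_eq, mem_univ_pi]
    constructor
    · intro h i
      rw [Fin.eq_zero i]; exact h
    · intro h; exact h 0
  have hR : {u : Fin 1 → ℝ | r < u 0 / 2}
      = Set.univ.pi fun _ : Fin 1 => {x : ℝ | r < x / 2} := by
    ext u
    simp only [mem_setOf_eq, mem_univ_pi]
    constructor
    · intro h i
      rw [Fin.eq_zero i]; exact h
    · intro h; exact h 0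
  rw [hL, hR, Measure.pi_pi, Measure.pi_pi]
  apply Finset.prod_congr rfl
  intro i _
  have hsL : {x : ℝ | r < min x (1-x)} = Ioo r (1-r) := by
    ext x
    simp only [mem_setOf_eq, lt_min_iff, mem_Ioo]
    constructor
    · rintro ⟨a, b⟩; exact ⟨a, by linarith⟩
    · rintro ⟨a, b⟩; exact ⟨a, by linarith⟩
  have hsR : {x : ℝ | r < x / 2} = Ioi (2*r) := by
    ext x
    simp only [mem_setOf_eq, mem_Ioi]
    rw [lt_div_iff₀ (by norm_num : (0:ℝ) < 2)]
    constructor <;> intro <;> linarith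
  rw [hsL, hsR]
  rcases le_or_gt 0 r with hr | hr
  · rw [nu_Ioi (by linarith)]
    rw [nu, Measure.restrict_apply measurableSet_Ioo]
    have : Ioo r (1-r) ∩ Ioo 0 1 = Ioo r (1-r) := by
      apply inter_eq_left.mpr
      exact Ioo_subset_Ioo hr (by linarith)
    rw [this, Real.volume_Ioo]
    congr 1
    ring
  · have e2 : nu (Ioi (2*r)) = 1 := by
      refine le_antisymm prob_le_one ?_
      have : (Ioo (0:ℝ) 1) ⊆ Ioi (2*r) := fun x hx => by
        simp only [mem_Ioi]; rcases hx with ⟨a, b⟩; linarith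
      calc (1:ℝ≥0∞) = nu (Ioo 0 1) := by
            rw [nu, Measure.restrict_apply measurableSet_Ioo, inter_self, Real.volume_Ioo]
            norm_num
      _ ≤ nu (Ioi (2*r)) := measure_mono this
    have e1 : nu (Ioo r (1-r)) = 1 := by
      refine le_antisymm prob_le_one ?_
      have : (Ioo (0:ℝ) 1) ⊆ Ioo r (1-r) := fun x hx => by
        rcases hx with ⟨a, b⟩; exact ⟨by linarith, by linarith⟩
      calc (1:ℝ≥0∞) = nu (Ioo 0 1) := by
            rw [nu, Measure.restrict_apply measurableSet_Ioo, inter_self, Real.volume_Ioo]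
            norm_num
      _ ≤ nu (Ioo r (1-r)) := measure_mono this
    rw [e1, e2]

lemma maps_eq_of_Ioi {n : ℕ} {f g : (Fin n → ℝ) → ℝ} (hf : Measurable f) (hg : Measurable g)
    (h : ∀ r, Measure.pi (fun _ : Fin n => nu) (f ⁻¹' Ioi r)
       = Measure.pi (fun _ : Fin n => nu) (g ⁻¹' Ioi r)) :
    Measure.map f (Measure.pi (fun _ : Fin n => nu))
      = Measure.map g (Measure.pi (fun _ : Fin n => nu)) := by
  set μ := Measure.pi (fun _ : Fin n => nu)
  haveI : IsProbabilityMeasure (Measure.map f μ) := Measure.isProbabilityMeasure_map hf.aemeasurable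
  apply Measure.ext_of_Iic
  intro x
  rw [Measure.map_apply hf measurableSet_Iic, Measure.map_apply hg measurableSet_Iic]
  have hfc : f ⁻¹' Iic x = (f ⁻¹' Ioi x)ᶜ := by ext u; simp
  have hgc : g ⁻¹' Iic x = (g ⁻¹' Ioi x)ᶜ := by ext u; simp
  rw [hfc, hgc, measure_compl (hf measurableSet_Ioi) (measure_ne_top _ _),
    measure_compl (hg measurableSet_Ioi) (measure_ne_top _ _), h x]

/-- The minimum of two uniform spacings is equal in distribution to half of a single
spacing. -/
theorem min_two_spacings_eq_half_spacing (n : ℕ) (hn : 1 ≤ n) :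
    Measure.map (fun u => min (spacing u 0) (spacing u 1)) (unif n)
      = Measure.map (fun u => spacing u 0 / 2) (unif n) := by
  obtain ⟨k, rfl⟩ : ∃ k, n = k + 1 := ⟨n-1, by omega⟩
  show Measure.map _ (Measure.pi (fun _ : Fin (k+1) => nu))
    = Measure.map _ (Measure.pi (fun _ : Fin (k+1) => nu))
  cases k with
  | zero =>
    have hfL : (fun u : Fin 1 → ℝ => min (spacing u 0) (spacing u 1))
        = fun u => min (u 0) (1 - u 0) := by
      funext u
      rw [spacing_zero, spacing_one']
      congr 1
      rw [ostat]
      simp only [Function.comp_apply]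
      congr 1
      apply Subsingleton.elim
    have hfR : (fun u : Fin 1 → ℝ => spacing u 0 / 2) = fun u => u 0 / 2 := by
      funext u
      rw [spacing_zero]
      congr 1
      rw [ostat]
      simp only [Function.comp_apply]
      congr 1
      apply Subsingleton.elim
    rw [hfL, hfR]
    apply maps_eq_of_Ioi
    · exact ((continuous_apply 0).min (continuous_const.sub (continuous_apply 0))).measurable
    · exact ((continuous_apply 0).div_const 2).measurable
    · intro r
      have h1 : (fun u : Fin 1 → ℝ => min (u 0) (1 - u 0)) ⁻¹' Ioi r
          = {u | r < min (u 0) (1 - u 0)} := rfl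
      have h2 : (fun u : Fin 1 → ℝ => u 0 / 2) ⁻¹' Ioi r = {u | r < u 0 / 2} := rfl
      rw [h1, h2]
      exact claim_one r
  | succ m =>
    have hfL : (fun u : Fin (m+2) → ℝ => min (spacing u 0) (spacing u 1))
        = fun u => min (ostat u 0) (ostat u 1 - ostat u 0) := by
      funext u
      rw [spacing_zero, spacing_one]
    have hfR : (fun u : Fin (m+2) → ℝ => spacing u 0 / 2) = fun u => ostat u 0 / 2 := by
      funext u
      rw [spacing_zero]
    rw [hfL, hfR]
    apply maps_eq_of_Ioi
    · exact measurable_ostat_zero.min (measurable_ostat_one.sub measurable_ostat_zero)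
    · exact measurable_ostat_zero.div_const 2
    · intro r
      have h1 : (fun u : Fin (m+2) → ℝ => min (ostat u 0) (ostat u 1 - ostat u 0)) ⁻¹' Ioi r
          = {u | r < ostat u 0 ∧ r < ostat u 1 - ostat u 0} := by
        ext u; simp [lt_min_iff]
      have h2 : (fun u : Fin (m+2) → ℝ => ostat u 0 / 2) ⁻¹' Ioi r
          = {u | r < ostat u 0 / 2} := rfl
      rw [h1, h2]
      exact claim_two m r
end

section
/- For α = 1, the expected total length of the on-line nearest-neighbour graph on the point sequence (0, 1, U_1, ..., U_n), where U_i are i.i.d. uniform on (0,1), equals 1 + Σ_{i=1}^n 1/(2(i+1)), and hence equals (1/2)log n + (1/2)(γ+1) + O(1/n) as n → ∞, where γ is Euler's constant. -/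
open MeasureTheory

/-- Total `α`-power-weighted length of the on-line nearest-neighbour graph on the
sequence of points `x 0, x 1, …`: each point after the first is joined to its nearest
neighbour among the points preceding it in the sequence. -/
noncomputable def ongWeight (α : ℝ) {m : ℕ} (x : Fin m → ℝ) : ℝ :=
  ∑ i : Fin m, if 0 < (i : ℕ) then
      (sInf {d : ℝ | ∃ j : Fin m, (j : ℕ) < (i : ℕ) ∧ d = |x i - x j|}) ^ α
    else 0



/-- nearest distance from `v` to `{0,1,w_0,...,w_{k-1}}`. -/
noncomputable def D (k : ℕ) (w : Fin k → ℝ) (v : ℝ) : ℝ :=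
  (Finset.univ : Finset (Fin (k+2))).inf' ⟨0, Finset.mem_univ _⟩
    fun j => |v - (Fin.cons 0 (Fin.cons 1 w) : Fin (k+2) → ℝ) j|

lemma ong_base (u : Fin 0 → ℝ) : ongWeight 1 (Fin.cons 0 (Fin.cons 1 u)) = 1 := by
  have hset : {d : ℝ | ∃ j : Fin 2, (j : ℕ) < ((1 : Fin 2) : ℕ) ∧
      d = |(Fin.cons 0 (Fin.cons 1 u) : Fin 2 → ℝ) 1 - (Fin.cons 0 (Fin.cons 1 u) : Fin 2 → ℝ) j|} = {1} := by
    ext d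
    constructor
    · rintro ⟨j, hj, rfl⟩
      have : j = 0 := by omega
      subst this
      simp
    · rintro rfl
      exact ⟨0, by simp⟩
  rw [ongWeight, show (Finset.univ : Finset (Fin 2)) = {0, 1} by decide,
    Finset.sum_insert (by decide), Finset.sum_singleton, hset]
  simp

lemma cons_castSucc (n : ℕ) (u : Fin (n+1) → ℝ) (i : Fin (n+2)) :
    (Fin.cons 0 (Fin.cons 1 u) : Fin (n+3) → ℝ) (Fin.castSucc i)
      = (Fin.cons 0 (Fin.cons 1 (u ∘ Fin.castSucc)) : Fin (n+2) → ℝ) i := by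
  refine Fin.cases rfl (fun j => ?_) i
  rw [← Fin.succ_castSucc, Fin.cons_succ, Fin.cons_succ]
  refine Fin.cases rfl (fun m => ?_) j
  rw [← Fin.succ_castSucc, Fin.cons_succ, Fin.cons_succ]
  rfl

lemma ong_rec (n : ℕ) (u : Fin (n+1) → ℝ) :
    ongWeight 1 (Fin.cons 0 (Fin.cons 1 u)) =
      ongWeight 1 (Fin.cons 0 (Fin.cons 1 (u ∘ Fin.castSucc)))
        + D n (u ∘ Fin.castSucc) (u (Fin.last n)) := by
  set x' : Fin (n+3) → ℝ := Fin.cons 0 (Fin.cons 1 u) with hx'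
  set x'' : Fin (n+2) → ℝ := Fin.cons 0 (Fin.cons 1 (u ∘ Fin.castSucc)) with hx''
  have hcomp : ∀ i : Fin (n+2), x' (Fin.castSucc i) = x'' i := cons_castSucc n u
  have hnat : ∀ (j : Fin (n+3)) (hj : (j : ℕ) < n+2), x' j = x'' ⟨(j : ℕ), hj⟩ := by
    intro j hj
    have h1 : j = Fin.castSucc ⟨(j : ℕ), hj⟩ := Fin.ext rfl
    exact (congrArg x' h1).trans (hcomp _)
  have hlast : x' (Fin.last (n+2)) = u (Fin.last n) := by
    rw [show Fin.last (n+2) = Fin.succ (Fin.last (n+1)) from rfl, hx', Fin.cons_succ,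
      show Fin.last (n+1) = Fin.succ (Fin.last n) from rfl, Fin.cons_succ]
  rw [ongWeight, ongWeight, Fin.sum_univ_castSucc]
  congr 1
  · apply Finset.sum_congr rfl
    intro i _
    have hval : ((Fin.castSucc i : Fin (n+3)) : ℕ) = (i : ℕ) := rfl
    rw [hval]
    by_cases hi : 0 < (i : ℕ)
    · rw [if_pos hi, if_pos hi]
      congr 2
      ext d
      constructor
      · rintro ⟨j, hj, rfl⟩
        have hj2 : (j : ℕ) < n + 2 := by omega
        refine ⟨⟨(j : ℕ), hj2⟩, hj, ?_⟩
        rw [hcomp, hnat j hj2]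
      · rintro ⟨j, hj, rfl⟩
        exact ⟨Fin.castSucc j, hj, by rw [hcomp, hcomp]⟩
    · rw [if_neg hi, if_neg hi]
  · have hpos : 0 < ((Fin.last (n+2) : Fin (n+3)) : ℕ) := by simp
    rw [if_pos hpos]
    have hset : {d : ℝ | ∃ j : Fin (n+3), (j : ℕ) < ((Fin.last (n+2) : Fin (n+3)) : ℕ) ∧
        d = |x' (Fin.last (n+2)) - x' j|}
        = (fun j : Fin (n+2) => |u (Fin.last n) - x'' j|) '' Set.univ := by
      ext d
      constructor
      · rintro ⟨j, hj, rfl⟩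
        have hj2 : (j : ℕ) < n + 2 := hj
        refine ⟨⟨(j : ℕ), hj2⟩, Set.mem_univ _, ?_⟩
        show |u (Fin.last n) - x'' ⟨(j : ℕ), hj2⟩| = _
        rw [← hlast, ← hnat j hj2]
      · rintro ⟨j, _, rfl⟩
        exact ⟨Fin.castSucc j, j.2, by rw [hcomp, hlast]⟩
    rw [hset, D]
    refine Eq.trans ?_ (Finset.inf'_eq_csInf_image _ _ _).symm
    rw [Finset.coe_univ]
    exact Real.rpow_one _

section Basics
open Set

instance nu_prob : IsProbabilityMeasure (volume.restrict (Set.Ioo (0:ℝ) 1)) :=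
  ⟨by simp⟩

instance unif_prob (n : ℕ) : IsProbabilityMeasure (unif n) := by
  unfold unif; infer_instance

lemma measurable_inf' {δ : Type*} [MeasurableSpace δ] {ι : Type*} (s : Finset ι)
    (hs : s.Nonempty) (f : ι → δ → ℝ) (hf : ∀ i, Measurable (f i)) :
    Measurable fun a => s.inf' hs fun i => f i a := by
  induction hs using Finset.Nonempty.cons_induction with
  | singleton a => simp only [Finset.inf'_singleton]; exact hf a
  | cons a s h hs ih =>
      simp only [Finset.inf'_cons (H := hs)]
      exact (hf a).inf ih

lemma measurable_X {m : ℕ} (j : Fin (m+2)) :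
    Measurable (fun u : Fin m → ℝ => (Fin.cons 0 (Fin.cons 1 u) : Fin (m+2) → ℝ) j) := by
  refine Fin.cases ?_ (fun j => ?_) j
  · simpa using measurable_const
  · simp only [Fin.cons_succ]
    refine Fin.cases ?_ (fun i => ?_) j
    · simpa using measurable_const
    · simpa using measurable_pi_apply i

lemma measurable_D (k : ℕ) : Measurable (fun p : (Fin k → ℝ) × ℝ => D k p.1 p.2) := by
  unfold D
  exact measurable_inf' _ _ _ fun j =>
    (measurable_snd.sub ((measurable_X j).comp measurable_fst)).abs

lemma sInf_eq_inf' {m : ℕ} (x : Fin m → ℝ) (i : Fin m) (hi : 0 < (i : ℕ)) :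
    sInf {d : ℝ | ∃ j : Fin m, (j : ℕ) < (i : ℕ) ∧ d = |x i - x j|}
      = (Finset.Iio i).inf' ⟨⟨0, lt_of_le_of_lt (Nat.zero_le _) i.2⟩, by
          simp [Finset.mem_Iio]; exact Fin.lt_def.2 (by simpa using hi)⟩
        (fun j => |x i - x j|) := by
  refine Eq.trans ?_ (Finset.inf'_eq_csInf_image _ _ _).symm
  congr 1
  ext d
  constructor
  · rintro ⟨j, hj, rfl⟩
    exact ⟨j, by simpa [Finset.mem_Iio] using Fin.lt_def.2 hj, rfl⟩
  · rintro ⟨j, hj, rfl⟩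
    refine ⟨j, ?_, rfl⟩
    have : j < i := by simpa [Finset.mem_Iio] using hj
    exact Fin.lt_def.1 this

lemma measurable_ong (n : ℕ) :
    Measurable (fun u : Fin n → ℝ => ongWeight 1 (Fin.cons 0 (Fin.cons 1 u))) := by
  unfold ongWeight
  refine Finset.measurable_sum _ fun i _ => ?_
  by_cases hi : 0 < (i : ℕ)
  · simp only [if_pos hi]
    have : (fun u : Fin n → ℝ =>
        (sInf {d : ℝ | ∃ j : Fin (n+2), (j : ℕ) < (i : ℕ) ∧
          d = |(Fin.cons 0 (Fin.cons 1 u) : Fin (n+2) → ℝ) i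
            - (Fin.cons 0 (Fin.cons 1 u) : Fin (n+2) → ℝ) j|}) ^ (1:ℝ))
        = fun u : Fin n → ℝ => (Finset.Iio i).inf'
            ⟨⟨0, lt_of_le_of_lt (Nat.zero_le _) i.2⟩, by
              simp [Finset.mem_Iio]; exact Fin.lt_def.2 (by simpa using hi)⟩
            (fun j => |(Fin.cons 0 (Fin.cons 1 u) : Fin (n+2) → ℝ) i
              - (Fin.cons 0 (Fin.cons 1 u) : Fin (n+2) → ℝ) j|) := by
      funext u
      rw [sInf_eq_inf' _ _ hi, Real.rpow_one]
    rw [this]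
    exact measurable_inf' _ _ _ fun j => ((measurable_X i).sub (measurable_X j)).abs
  · simp only [if_neg hi]
    exact measurable_const

end Basics


section Bounds
open Set

lemma D_nonneg (k : ℕ) (w : Fin k → ℝ) (v : ℝ) : 0 ≤ D k w v :=
  Finset.le_inf' _ _ fun j _ => abs_nonneg _

lemma D_le_abs (k : ℕ) (w : Fin k → ℝ) (v : ℝ) : D k w v ≤ |v| := by
  have := Finset.inf'_le (b := (0 : Fin (k+2)))
    (fun j => |v - (Fin.cons 0 (Fin.cons 1 w) : Fin (k+2) → ℝ) j|) (Finset.mem_univ _)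
  simpa [D] using this

lemma X_mem {m : ℕ} (u : Fin m → ℝ) (hu : ∀ i, u i ∈ Set.Icc (0:ℝ) 1) (j : Fin (m+2)) :
    (Fin.cons 0 (Fin.cons 1 u) : Fin (m+2) → ℝ) j ∈ Set.Icc (0:ℝ) 1 := by
  refine Fin.cases ?_ (fun j => ?_) j
  · simp
  · simp only [Fin.cons_succ]
    refine Fin.cases ?_ (fun i => ?_) j
    · simp
    · simpa using hu i

lemma ong_bound (n : ℕ) (u : Fin n → ℝ) (hu : ∀ i, u i ∈ Set.Icc (0:ℝ) 1) :
    |ongWeight 1 (Fin.cons 0 (Fin.cons 1 u))| ≤ (n:ℝ) + 2 := by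
  set x : Fin (n+2) → ℝ := Fin.cons 0 (Fin.cons 1 u) with hx
  have hxm : ∀ j, x j ∈ Set.Icc (0:ℝ) 1 := X_mem u hu
  unfold ongWeight
  calc |∑ i : Fin (n+2), if 0 < (i:ℕ) then
      (sInf {d : ℝ | ∃ j : Fin (n+2), (j:ℕ) < (i:ℕ) ∧ d = |x i - x j|}) ^ (1:ℝ) else 0|
      ≤ ∑ i : Fin (n+2), |if 0 < (i:ℕ) then
      (sInf {d : ℝ | ∃ j : Fin (n+2), (j:ℕ) < (i:ℕ) ∧ d = |x i - x j|}) ^ (1:ℝ) else 0| :=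
        Finset.abs_sum_le_sum_abs _ _
    _ ≤ ∑ _i : Fin (n+2), (1:ℝ) := by
        refine Finset.sum_le_sum fun i _ => ?_
        by_cases hi : 0 < (i:ℕ)
        · rw [if_pos hi, sInf_eq_inf' x i hi, Real.rpow_one]
          rw [abs_le]
          constructor
          · refine le_trans (by norm_num) (Finset.le_inf' _ _ fun j _ => abs_nonneg _)
          · refine le_trans (Finset.inf'_le _ (b := ⟨0, by omega⟩) ?_) ?_
            · simp only [Finset.mem_Iio]
              exact Fin.lt_def.2 (by simpa using hi)
            · have h0 : x ⟨0, by omega⟩ = 0 := rfl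
              rw [h0, sub_zero]
              rw [abs_of_nonneg (hxm i).1]
              exact (hxm i).2
        · rw [if_neg hi]; norm_num
    _ = (n:ℝ) + 2 := by simp
  
lemma ae_unif (k : ℕ) : ∀ᵐ w ∂(unif k), ∀ i, w i ∈ Set.Ioo (0:ℝ) 1 := by
  set S : Set (Fin k → ℝ) := Set.pi Set.univ (fun _ => Set.Ioo (0:ℝ) 1) with hS
  have hSm : MeasurableSet S := MeasurableSet.univ_pi fun _ => measurableSet_Ioo
  have h1 : unif k S = 1 := by
    rw [unif, hS, Measure.pi_pi]
    simp [Measure.restrict_apply measurableSet_Ioo]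
  have h0 : unif k Sᶜ = 0 := (prob_compl_eq_zero_iff hSm).2 h1
  refine (ae_iff).2 ?_
  convert h0 using 2
  ext w
  simp [hS, Set.mem_pi]

lemma ae_prod_snd {n : ℕ} {P : (Fin n → ℝ) → Prop} (hP : MeasurableSet {w | P w})
    (h : ∀ᵐ w ∂(unif n), P w) :
    ∀ᵐ p ∂((volume.restrict (Set.Ioo (0:ℝ) 1)).prod (unif n)), P p.2 := by
  rw [← Measure.snd_prod (μ := volume.restrict (Set.Ioo (0:ℝ) 1)) (ν := unif n)] at h
  exact (ae_map_iff measurable_snd.aemeasurable hP).1 h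

lemma ae_prod_fst {n : ℕ} {P : ℝ → Prop} (hP : MeasurableSet {v | P v})
    (h : ∀ᵐ v ∂(volume.restrict (Set.Ioo (0:ℝ) 1)), P v) :
    ∀ᵐ p ∂((volume.restrict (Set.Ioo (0:ℝ) 1)).prod (unif n)), P p.1 := by
  rw [← Measure.fst_prod (μ := volume.restrict (Set.Ioo (0:ℝ) 1)) (ν := unif n)] at h
  exact (ae_map_iff measurable_fst.aemeasurable hP).1 h

end Bounds

section Analytic
open Set

lemma nuS {v t : ℝ} (ht : 0 < t) (htv : t < v) (ht1 : t < 1 - v) :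
    (volume.restrict (Set.Ioo (0:ℝ) 1)) {u : ℝ | t < |v - u|}
      = ENNReal.ofReal (1 - 2*t) := by
  have hmeas : MeasurableSet {u : ℝ | t < |v - u|} :=
    measurableSet_lt measurable_const (measurable_const.sub measurable_id).abs
  rw [Measure.restrict_apply hmeas]
  have hset : {u : ℝ | t < |v - u|} ∩ Set.Ioo 0 1
      = Set.Ioo 0 (v - t) ∪ Set.Ioo (v + t) 1 := by
    ext u
    simp only [Set.mem_inter_iff, Set.mem_setOf_eq, Set.mem_Ioo, Set.mem_union]
    constructor
    · rintro ⟨hlt, hu0, hu1⟩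
      rcases lt_abs.1 hlt with h | h
      · exact Or.inl ⟨hu0, by linarith⟩
      · exact Or.inr ⟨by linarith, hu1⟩
    · rintro (⟨h0, h1⟩ | ⟨h0, h1⟩)
      · exact ⟨lt_abs.2 (Or.inl (by linarith)), h0, by linarith⟩
      · exact ⟨lt_abs.2 (Or.inr (by linarith)), by linarith, h1⟩
  rw [hset, measure_union ?hd measurableSet_Ioo]
  · rw [Real.volume_Ioo, Real.volume_Ioo, ← ENNReal.ofReal_add (by linarith) (by linarith)]
    congr 1
    ring
  case hd =>
    rw [Set.disjoint_left]
    rintro u ⟨_, h1⟩ ⟨h2, _⟩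
    linarith

lemma inner_int (k : ℕ) {v t : ℝ} (ht : 0 < t) (htv : t < v) (ht1 : t < 1 - v) :
    ∫ w, (∏ i : Fin k, if t < |v - w i| then (1:ℝ) else 0) ∂(unif k)
      = (1 - 2*t)^k := by
  have hSm : MeasurableSet {u : ℝ | t < |v - u|} :=
    measurableSet_lt measurable_const (measurable_const.sub measurable_id).abs
  have hprod : ∀ w : Fin k → ℝ, (∏ i : Fin k, if t < |v - w i| then (1:ℝ) else 0)
      = Set.indicator (Set.pi Set.univ fun _ : Fin k => {u : ℝ | t < |v - u|})
          (fun _ => (1:ℝ)) w := by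
    intro w
    by_cases h : ∀ i, t < |v - w i|
    · rw [Set.indicator_of_mem (by simpa [Set.mem_pi] using h)]
      exact Finset.prod_eq_one fun i _ => if_pos (h i)
    · push_neg at h
      obtain ⟨i, hi⟩ := h
      rw [Set.indicator_of_notMem (by simp [Set.mem_pi]; exact ⟨i, hi⟩)]
      exact Finset.prod_eq_zero (Finset.mem_univ i) (if_neg (not_lt.2 hi))
  simp_rw [hprod]
  rw [integral_indicator_const (1:ℝ) (MeasurableSet.univ_pi fun _ => hSm)]
  rw [show unif k = Measure.pi (fun _ => volume.restrict (Set.Ioo (0:ℝ) 1)) from rfl,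
    measureReal_def, Measure.pi_pi]
  simp only [nuS ht htv ht1, Finset.prod_const, Finset.card_univ, Fintype.card_fin]
  rw [← ENNReal.ofReal_pow (by linarith), ENNReal.toReal_ofReal (pow_nonneg (by linarith) k), smul_eq_mul,
    mul_one]

lemma integral_pow_lin (k : ℕ) (a : ℝ) :
    ∫ t in (0:ℝ)..a, (1-2*t)^k = (1 - (1-2*a)^(k+1))/(2*((k:ℝ)+1)) := by
  have h : ∀ t : ℝ, HasDerivAt (fun t : ℝ => (1-2*t)^(k+1) / (-(2*((k:ℝ)+1))))
      ((1-2*t)^k) t := by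
    intro t
    have h1 : HasDerivAt (fun t : ℝ => 1-2*t) (-2) t := by
      simpa using ((hasDerivAt_id t).const_mul (2:ℝ)).const_sub (1:ℝ)
    have h3 := (h1.pow (k+1)).div_const (-(2*((k:ℝ)+1)))
    refine h3.congr_deriv ?_
    push_cast [Nat.add_sub_cancel]
    have hk : ((k:ℝ)+1) ≠ 0 := by positivity
    field_simp
  rw [intervalIntegral.integral_eq_sub_of_hasDerivAt (fun t _ => h t)
    (Continuous.intervalIntegrable (by continuity) _ _)]
  have hk : ((k:ℝ)+1) ≠ 0 := by positivity
  norm_num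
  field_simp
  ring

lemma integral_pow_lin2 (k : ℕ) :
    ∫ t in (1/2 : ℝ)..1, (2*t-1)^k = 1/(2*((k:ℝ)+1)) := by
  have h : ∀ t : ℝ, HasDerivAt (fun t : ℝ => (2*t-1)^(k+1) / (2*((k:ℝ)+1)))
      ((2*t-1)^k) t := by
    intro t
    have h1 : HasDerivAt (fun t : ℝ => 2*t-1) 2 t := by
      simpa using ((hasDerivAt_id t).const_mul (2:ℝ)).sub_const (1:ℝ)
    have h3 := (h1.pow (k+1)).div_const (2*((k:ℝ)+1))
    refine h3.congr_deriv ?_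
    push_cast [Nat.add_sub_cancel]
    have hk : ((k:ℝ)+1) ≠ 0 := by positivity
    field_simp
  rw [intervalIntegral.integral_eq_sub_of_hasDerivAt (fun t _ => h t)
    (Continuous.intervalIntegrable (by continuity) _ _)]
  have hk : ((k:ℝ)+1) ≠ 0 := by positivity
  norm_num

end Analytic

section LayerCake
open Set

lemma D_le_left {k : ℕ} (w : Fin k → ℝ) {v : ℝ} (hv : v ∈ Set.Ioo (0:ℝ) 1) :
    D k w v ≤ v := by
  have h := Finset.inf'_le (b := (0 : Fin (k+2)))
    (fun j => |v - (Fin.cons 0 (Fin.cons 1 w) : Fin (k+2) → ℝ) j|) (Finset.mem_univ _)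
  have h0 : (Fin.cons 0 (Fin.cons 1 w) : Fin (k+2) → ℝ) 0 = 0 := rfl
  rw [h0, sub_zero, abs_of_pos hv.1] at h
  exact h

lemma D_le_right {k : ℕ} (w : Fin k → ℝ) {v : ℝ} (hv : v ∈ Set.Ioo (0:ℝ) 1) :
    D k w v ≤ 1 - v := by
  have h := Finset.inf'_le (b := (1 : Fin (k+2)))
    (fun j => |v - (Fin.cons 0 (Fin.cons 1 w) : Fin (k+2) → ℝ) j|) (Finset.mem_univ _)
  have h1 : (Fin.cons 0 (Fin.cons 1 w) : Fin (k+2) → ℝ) 1 = 1 := rfl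
  rw [h1] at h
  rw [abs_of_nonpos (by linarith [hv.2])] at h
  unfold D
  linarith

lemma D_eq_integral (k : ℕ) {v : ℝ} (hv : v ∈ Set.Ioo (0:ℝ) 1) (w : Fin k → ℝ) :
    D k w v = ∫ t in Set.Ioo 0 (min v (1-v)),
      ∏ i : Fin k, if t < |v - w i| then (1:ℝ) else 0 := by
  set a := min v (1-v) with ha
  have ha0 : 0 < a := lt_min hv.1 (by linarith [hv.2])
  have hDa : D k w v ≤ a := le_min (D_le_left w hv) (D_le_right w hv)
  have hD0 : 0 ≤ D k w v := D_nonneg k w v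
  have heq : Set.EqOn (fun t => ∏ i : Fin k, if t < |v - w i| then (1:ℝ) else 0)
      ((Set.Iio (D k w v)).indicator (fun _ => (1:ℝ))) (Set.Ioo 0 a) := by
    intro t ht
    by_cases hD : t < D k w v
    · rw [Set.indicator_of_mem (Set.mem_Iio.2 hD)]
      refine Finset.prod_eq_one fun i _ => ?_
      refine if_pos (lt_of_lt_of_le hD ?_)
      have := Finset.inf'_le (b := (Fin.succ (Fin.succ i)))
        (fun j => |v - (Fin.cons 0 (Fin.cons 1 w) : Fin (k+2) → ℝ) j|) (Finset.mem_univ _)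
      simpa [D, Fin.cons_succ] using this
    · rw [Set.indicator_of_notMem (fun hmem => hD (Set.mem_Iio.1 hmem))]
      push_neg at hD
      obtain ⟨j0, -, hj0⟩ := Finset.exists_mem_eq_inf'
        (⟨(0 : Fin (k+2)), Finset.mem_univ _⟩ : (Finset.univ : Finset (Fin (k+2))).Nonempty)
        (fun j => |v - (Fin.cons 0 (Fin.cons 1 w) : Fin (k+2) → ℝ) j|)
      have hj0' : D k w v = |v - (Fin.cons 0 (Fin.cons 1 w) : Fin (k+2) → ℝ) j0| := hj0
      clear hj0
      revert hj0'
      refine Fin.cases ?_ (fun j1 => ?_) j0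
      · intro hj0'
        have : D k w v = v := by
          rw [hj0', show (Fin.cons 0 (Fin.cons 1 w) : Fin (k+2) → ℝ) 0 = 0 from rfl,
            sub_zero, abs_of_pos hv.1]
        exfalso
        have := ht.2
        simp only [ha] at this
        have hav : a ≤ v := min_le_left _ _
        linarith
      · revert j1
        refine Fin.cases ?_ (fun j2 => ?_) <;> intro hj0'
        · have : D k w v = 1 - v := by
            rw [hj0', show (Fin.cons 0 (Fin.cons 1 w) : Fin (k+2) → ℝ) (Fin.succ 0) = 1 from rfl,
              abs_of_nonpos (by linarith [hv.2])]
            ring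
          exfalso
          have hav : a ≤ 1 - v := min_le_right _ _
          have := ht.2
          linarith
        · refine Finset.prod_eq_zero (Finset.mem_univ j2) (if_neg (not_lt.2 ?_))
          have : |v - w j2| = D k w v := by
            rw [hj0']
            congr 1
          linarith [this ▸ hD]
  rw [setIntegral_congr_fun measurableSet_Ioo heq,
    setIntegral_indicator measurableSet_Iio]
  have hinter : Set.Ioo 0 a ∩ Set.Iio (D k w v) = Set.Ioo 0 (D k w v) := by
    ext t
    simp only [Set.mem_inter_iff, Set.mem_Ioo, Set.mem_Iio]
    constructor
    · rintro ⟨⟨h1, _⟩, h3⟩; exact ⟨h1, h3⟩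
    · rintro ⟨h1, h2⟩; exact ⟨⟨h1, lt_of_lt_of_le h2 hDa⟩, h2⟩
  rw [hinter, setIntegral_const, Real.volume_real_Ioo_of_le hD0, sub_zero,
    smul_eq_mul, mul_one]

end LayerCake

section IntD
open Set

lemma intD (k : ℕ) {v : ℝ} (hv : v ∈ Set.Ioo (0:ℝ) 1) :
    ∫ w, D k w v ∂(unif k)
      = (1 - (1 - 2*min v (1-v))^(k+1))/(2*((k:ℝ)+1)) := by
  set a := min v (1-v) with ha
  have ha0 : 0 < a := lt_min hv.1 (by linarith [hv.2])
  have hav : a ≤ v := min_le_left _ _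
  have ha1 : a ≤ 1 - v := min_le_right _ _
  have step1 : ∫ w, D k w v ∂(unif k)
      = ∫ w, (∫ t in Set.Ioo 0 a, ∏ i : Fin k, if t < |v - w i| then (1:ℝ) else 0)
          ∂(unif k) := by
    exact integral_congr_ae (ae_of_all _ fun w => D_eq_integral k hv w)
  rw [step1]
  haveI hfin : IsFiniteMeasure (volume.restrict (Set.Ioo (0:ℝ) a)) := by
    constructor
    rw [Measure.restrict_apply_univ, Real.volume_Ioo]
    exact ENNReal.ofReal_lt_top
  have hmeas : Measurable (fun p : (Fin k → ℝ) × ℝ =>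
      ∏ i : Fin k, if p.2 < |v - p.1 i| then (1:ℝ) else 0) := by
    refine Finset.measurable_prod _ fun i _ => ?_
    refine Measurable.ite ?_ measurable_const measurable_const
    exact measurableSet_lt measurable_snd
      ((measurable_const.sub ((measurable_pi_apply i).comp measurable_fst)).abs)
  have hint : Integrable (Function.uncurry fun (w : Fin k → ℝ) (t : ℝ) =>
      ∏ i : Fin k, if t < |v - w i| then (1:ℝ) else 0)
      ((unif k).prod (volume.restrict (Set.Ioo 0 a))) := by
    refine Integrable.mono' (integrable_const (1:ℝ)) hmeas.aestronglyMeasurable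
      (ae_of_all _ fun p => ?_)
    rw [Real.norm_eq_abs, abs_of_nonneg (Finset.prod_nonneg fun i _ => by positivity)]
    refine Finset.prod_le_one (fun i _ => by positivity) (fun i _ => by split <;> norm_num)
  rw [MeasureTheory.integral_integral_swap hint]
  have step2 : ∀ t ∈ Set.Ioo (0:ℝ) a,
      (∫ w, (∏ i : Fin k, if t < |v - w i| then (1:ℝ) else 0) ∂(unif k))
        = (1 - 2*t)^k := fun t ht =>
    inner_int k ht.1 (lt_of_lt_of_le ht.2 hav) (lt_of_lt_of_le ht.2 ha1)
  rw [setIntegral_congr_fun measurableSet_Ioo step2]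
  rw [← MeasureTheory.integral_Ioc_eq_integral_Ioo,
    ← intervalIntegral.integral_of_le (le_of_lt ha0)]
  exact integral_pow_lin k a

end IntD

section IntD2
open Set

lemma cont_min : Continuous fun v : ℝ => (1 - 2*min v (1-v)) := by
  refine continuous_const.sub (continuous_const.mul ?_)
  exact continuous_id.min (continuous_const.sub continuous_id)

lemma intD2 (k : ℕ) :
    ∫ v in Set.Ioo (0:ℝ) 1, (1 - (1 - 2*min v (1-v))^(k+1))/(2*((k:ℝ)+1))
      = 1/(2*((k:ℝ)+2)) := by
  rw [← MeasureTheory.integral_Ioc_eq_integral_Ioo,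
    ← intervalIntegral.integral_of_le (zero_le_one)]
  have hc : Continuous fun v : ℝ => (1 - 2*min v (1-v))^(k+1) := cont_min.pow _
  have hI : ∫ v in (0:ℝ)..1, (1 - 2*min v (1-v))^(k+1) = 1/((k:ℝ)+2) := by
    rw [← intervalIntegral.integral_add_adjacent_intervals
      (a := (0:ℝ)) (b := 1/2) (c := 1)
      (hc.intervalIntegrable _ _) (hc.intervalIntegrable _ _)]
    have h1 : ∫ v in (0:ℝ)..(1/2), (1 - 2*min v (1-v))^(k+1)
        = ∫ v in (0:ℝ)..(1/2), (1 - 2*v)^(k+1) := by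
      refine intervalIntegral.integral_congr fun v hv => ?_
      rw [Set.uIcc_of_le (by norm_num)] at hv
      rw [min_eq_left (by linarith [hv.1, hv.2])]
    have h2 : ∫ v in (1/2 : ℝ)..1, (1 - 2*min v (1-v))^(k+1)
        = ∫ v in (1/2 : ℝ)..1, (2*v - 1)^(k+1) := by
      refine intervalIntegral.integral_congr fun v hv => ?_
      rw [Set.uIcc_of_le (by norm_num)] at hv
      rw [min_eq_right (by linarith [hv.1, hv.2])]
      ring_nf
    rw [h1, h2, integral_pow_lin (k+1) (1/2), integral_pow_lin2 (k+1)]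
    push_cast
    norm_num
    field_simp
    ring
  have hsplit : ∀ v : ℝ, (1 - (1 - 2*min v (1-v))^(k+1))/(2*((k:ℝ)+1))
      = (1:ℝ)/(2*((k:ℝ)+1)) - (1 - 2*min v (1-v))^(k+1) * (1/(2*((k:ℝ)+1))) := by
    intro v; ring
  simp_rw [hsplit]
  rw [intervalIntegral.integral_sub (intervalIntegrable_const)
    ((hc.intervalIntegrable 0 1).mul_const _),
    intervalIntegral.integral_mul_const, hI, intervalIntegral.integral_const]
  have hk1 : ((k:ℝ)+1) ≠ 0 := by positivity
  have hk2 : ((k:ℝ)+2) ≠ 0 := by positivity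
  rw [smul_eq_mul]
  field_simp
  ring

end IntD2

section Main
open Set

lemma e_apply (n : ℕ) (u : Fin (n+1) → ℝ) :
    (MeasurableEquiv.piFinSuccAbove (fun _ : Fin (n+1) => ℝ) (Fin.last n)) u
      = (u (Fin.last n), u ∘ Fin.castSucc) := by
  show (u (Fin.last n), Fin.removeNth (Fin.last n) u) = _
  refine Prod.ext rfl ?_
  funext i
  simp [Fin.removeNth, Fin.succAbove_last]

lemma G1_integrable (n : ℕ) :
    Integrable (fun p : ℝ × (Fin n → ℝ) => ongWeight 1 (Fin.cons 0 (Fin.cons 1 p.2)))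
      ((volume.restrict (Set.Ioo (0:ℝ) 1)).prod (unif n)) := by
  have hmeas := (measurable_ong n).comp (measurable_snd :
    Measurable fun p : ℝ × (Fin n → ℝ) => p.2)
  refine Integrable.mono' (integrable_const ((n:ℝ)+2)) hmeas.aestronglyMeasurable ?_
  have hP : MeasurableSet {w : Fin n → ℝ | ∀ i, w i ∈ Set.Ioo (0:ℝ) 1} := by
    have : {w : Fin n → ℝ | ∀ i, w i ∈ Set.Ioo (0:ℝ) 1}
        = Set.pi Set.univ (fun _ => Set.Ioo (0:ℝ) 1) := by
      ext w; simp [Set.mem_pi]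
    rw [this]
    exact MeasurableSet.univ_pi fun _ => measurableSet_Ioo
  filter_upwards [ae_prod_snd hP (ae_unif n)] with p hp
  rw [Real.norm_eq_abs]
  exact ong_bound n p.2 fun i => ⟨le_of_lt (hp i).1, le_of_lt (hp i).2⟩

lemma G2_integrable (n : ℕ) :
    Integrable (fun p : ℝ × (Fin n → ℝ) => D n p.2 p.1)
      ((volume.restrict (Set.Ioo (0:ℝ) 1)).prod (unif n)) := by
  have hmeas := (measurable_D n).comp
    ((measurable_snd.prodMk measurable_fst) :
      Measurable fun p : ℝ × (Fin n → ℝ) => (p.2, p.1))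
  refine Integrable.mono' (integrable_const (1:ℝ)) hmeas.aestronglyMeasurable ?_
  filter_upwards [ae_prod_fst (n := n) measurableSet_Ioo (ae_restrict_mem measurableSet_Ioo)] with p hp
  · rw [Real.norm_eq_abs, abs_of_nonneg (D_nonneg _ _ _)]
    calc D n p.2 p.1 ≤ p.1 := D_le_left p.2 hp
    _ ≤ 1 := le_of_lt hp.2

lemma main_formula (n : ℕ) :
    ∫ u, ongWeight 1 (Fin.cons 0 (Fin.cons 1 u)) ∂(unif n)
      = 1 + ∑ i ∈ Finset.Icc 1 n, 1 / (2*((i:ℝ)+1)) := by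
  induction n with
  | zero =>
      rw [show (fun u : Fin 0 → ℝ => ongWeight 1 (Fin.cons 0 (Fin.cons 1 u)))
        = fun _ => (1:ℝ) from funext fun u => ong_base u]
      simp
  | succ n ih =>
      set ρ := (volume.restrict (Set.Ioo (0:ℝ) 1)).prod (unif n) with hρ
      have mp : MeasurePreserving
          (MeasurableEquiv.piFinSuccAbove (fun _ : Fin (n+1) => ℝ) (Fin.last n))
          (unif (n+1)) ρ :=
        measurePreserving_piFinSuccAbove (fun _ : Fin (n+1) => volume.restrict (Set.Ioo (0:ℝ) 1))
          (Fin.last n)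
      have hstep : ∫ u, ongWeight 1 (Fin.cons 0 (Fin.cons 1 u)) ∂(unif (n+1))
          = ∫ p : ℝ × (Fin n → ℝ),
              (ongWeight 1 (Fin.cons 0 (Fin.cons 1 p.2)) + D n p.2 p.1) ∂ρ := by
        rw [← mp.integral_comp' (g := fun p : ℝ × (Fin n → ℝ) =>
          ongWeight 1 (Fin.cons 0 (Fin.cons 1 p.2)) + D n p.2 p.1)]
        refine integral_congr_ae (ae_of_all _ fun u => ?_)
        simp only [e_apply]
        exact ong_rec n u
      rw [hstep, integral_add (G1_integrable n) (G2_integrable n)]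
      have hG1 : ∫ p : ℝ × (Fin n → ℝ), ongWeight 1 (Fin.cons 0 (Fin.cons 1 p.2)) ∂ρ
          = ∫ u, ongWeight 1 (Fin.cons 0 (Fin.cons 1 u)) ∂(unif n) := by
        have h1 : ∫ p : ℝ × (Fin n → ℝ), ongWeight 1 (Fin.cons 0 (Fin.cons 1 p.2)) ∂ρ
            = ∫ w, ongWeight 1 (Fin.cons 0 (Fin.cons 1 w)) ∂(ρ.map Prod.snd) :=
          (integral_map measurable_snd.aemeasurable
            (measurable_ong n).aestronglyMeasurable).symm
        rw [h1]
        have h2 : ρ.map Prod.snd = unif n := Measure.snd_prod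
        rw [h2]
      have hG2 : ∫ p : ℝ × (Fin n → ℝ), D n p.2 p.1 ∂ρ = 1/(2*((n:ℝ)+2)) := by
        rw [hρ, MeasureTheory.integral_prod _ (G2_integrable n)]
        have : ∀ v ∈ Set.Ioo (0:ℝ) 1,
            (∫ w, D n w v ∂(unif n))
              = (1 - (1 - 2*min v (1-v))^(n+1))/(2*((n:ℝ)+1)) := fun v hv => intD n hv
        rw [setIntegral_congr_fun measurableSet_Ioo this, intD2 n]
      rw [hG1, hG2, ih]
      rw [Finset.sum_Icc_succ_top (by omega : 1 ≤ n+1)]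
      push_cast
      ring

end Main

section Final

lemma sum_harmonic (n : ℕ) :
    ∑ i ∈ Finset.Icc 1 n, 1 / (2*((i:ℝ)+1)) = (harmonic (n+1) : ℝ)/2 - 1/2 := by
  induction n with
  | zero => simp [harmonic_succ]
  | succ n ih =>
      rw [Finset.sum_Icc_succ_top (by omega : 1 ≤ n+1), ih, harmonic_succ (n+1)]
      push_cast
      have : ((n:ℝ)+1+1) ≠ 0 := by positivity
      field_simp
      ring


/-- Expected total length (`α = 1`) of the ONG on `(0, 1, U₁, …, U_n)`:
it equals `1 + Σ_{i=1}^n 1/(2(i+1))`, and hence equals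
`(1/2) log n + (1/2)(γ+1) + O(1/n)` as `n → ∞`, where `γ` is Euler's constant. -/
theorem ong_expected_length_alpha_one :
    (∀ n : ℕ, 1 ≤ n →
      ∫ u, ongWeight 1 (Fin.cons 0 (Fin.cons 1 u)) ∂(unif n)
        = 1 + ∑ i ∈ Finset.Icc 1 n, 1 / (2*((i:ℝ)+1)))
    ∧ (fun n : ℕ =>
        (∫ u, ongWeight 1 (Fin.cons 0 (Fin.cons 1 u)) ∂(unif n))
          - ((1/2) * Real.log n
              + (1/2) * (Real.eulerMascheroniConstant + 1)))
        =O[Filter.atTop] fun n : ℕ => 1 / (n:ℝ) := by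
  constructor
  · intro n _
    exact main_formula n
  · rw [Asymptotics.isBigO_iff]
    refine ⟨1, ?_⟩
    rw [Filter.eventually_atTop]
    refine ⟨1, fun n hn => ?_⟩
    have hn1 : (1:ℝ) ≤ (n:ℝ) := by exact_mod_cast hn
    have hnpos : (0:ℝ) < (n:ℝ) := by linarith
    set γ := Real.eulerMascheroniConstant with hγ
    set H := ((harmonic (n+1) : ℚ) : ℝ) with hH
    have h1 : γ < H - Real.log ((n:ℝ)+1) := by
      have := Real.eulerMascheroniConstant_lt_eulerMascheroniSeq' (n+1)
      rw [Real.eulerMascheroniSeq', if_neg (by omega : n+1 ≠ 0)] at this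
      push_cast at this
      convert this using 2
    have h2 : H - Real.log ((n:ℝ)+2) < γ := by
      have := Real.eulerMascheroniSeq_lt_eulerMascheroniConstant (n+1)
      rw [Real.eulerMascheroniSeq] at this
      push_cast at this
      convert this using 3
      ring
    have hlog1 : Real.log (n:ℝ) ≤ Real.log ((n:ℝ)+1) :=
      Real.log_le_log hnpos (by linarith)
    have hlog2 : Real.log ((n:ℝ)+2) - Real.log (n:ℝ) ≤ 2/(n:ℝ) := by
      have hpos : (0:ℝ) < ((n:ℝ)+2)/(n:ℝ) := by positivity
      have h := Real.log_le_sub_one_of_pos hpos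
      rw [Real.log_div (by positivity) (by positivity)] at h
      have : ((n:ℝ)+2)/(n:ℝ) - 1 = 2/(n:ℝ) := by field_simp; ring
      linarith
    have hnn : 0 ≤ H - Real.log (n:ℝ) - γ := by linarith
    have hub : H - Real.log (n:ℝ) - γ ≤ 2/(n:ℝ) := by linarith
    rw [main_formula n, sum_harmonic n]
    have hexpr : 1 + (H/2 - 1/2)
        - (1/2 * Real.log (n:ℝ) + 1/2 * (γ + 1)) = (H - Real.log (n:ℝ) - γ)/2 := by
      ring
    rw [Real.norm_eq_abs, Real.norm_eq_abs, hexpr, abs_of_nonneg (by linarith),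
      abs_of_nonneg (by positivity : (0:ℝ) ≤ 1/(n:ℝ)), one_mul]
    have h2n : 2/(n:ℝ) = 2*(1/(n:ℝ)) := by ring
    linarith
end Final
end

section
/- For n ≥ 2 and α > 0, the expected total α-power-weighted length of the nearest-neighbour directed graph on n i.i.d. uniform points in (0,1) equals ((n-2)·2^{-α} + 2)·Γ(n+1)Γ(α+1)/Γ(n+α+1), which is asymptotic to 2^{-α}Γ(α+1)n^{1-α} as n → ∞. -/
open MeasureTheory Asymptotics

/-- Total `α`-power-weighted length of the nearest-neighbour (directed) graph on the
points `x 0, …, x (m-1)`: each point is joined by a directed edge to its nearest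
neighbour among the other points. -/
noncomputable def nnWeight (α : ℝ) {m : ℕ} (x : Fin m → ℝ) : ℝ :=
  ∑ i : Fin m, (sInf {d : ℝ | ∃ j : Fin m, j ≠ i ∧ d = |x i - x j|}) ^ α

open Set Filter Topology


lemma measurable_finset_inf' {ι β : Type*} [MeasurableSpace β] {s : Finset ι} (hs : s.Nonempty)
    (f : ι → β → ℝ) (hf : ∀ i, Measurable (f i)) :
    Measurable fun x => s.inf' hs fun i => f i x := by
  induction hs using Finset.Nonempty.cons_induction with
  | singleton a => simpa using hf a
  | cons a s h hs ih =>
    simp only [Finset.inf'_cons (H := hs)]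
    exact Measurable.inf (hf a) ih

lemma erase_ne {N : ℕ} (hN : 2 ≤ N) (i : Fin N) : (Finset.univ.erase i).Nonempty := by
  rw [← Finset.card_pos, Finset.card_erase_of_mem (Finset.mem_univ i), Finset.card_univ,
    Fintype.card_fin]
  omega

lemma sInf_eq_inf'_s15 {N : ℕ} (hN : 2 ≤ N) (i : Fin N) (x : Fin N → ℝ) :
    sInf {d : ℝ | ∃ j : Fin N, j ≠ i ∧ d = |x i - x j|}
      = (Finset.univ.erase i).inf' (erase_ne hN i) (fun j => |x i - x j|) := by
  rw [Finset.inf'_eq_csInf_image]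
  congr 1
  ext d
  simp [eq_comm]



instance : IsProbabilityMeasure (volume.restrict (Set.Ioo (0:ℝ) 1)) :=
  ⟨by simp [Real.volume_Ioo]⟩

instance (n : ℕ) : IsProbabilityMeasure (unif n) := by
  unfold unif; infer_instance

lemma unif_ae_mem (n : ℕ) : ∀ᵐ x ∂unif n, ∀ i, x i ∈ Set.Ioo (0:ℝ) 1 := by
  rw [MeasureTheory.ae_all_iff]
  intro i
  have h0 : ∀ᵐ u ∂(volume.restrict (Set.Ioo (0:ℝ) 1)), u ∈ Set.Ioo (0:ℝ) 1 :=
    ae_restrict_mem measurableSet_Ioo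
  exact (MeasureTheory.Measure.tendsto_eval_ae_ae (μ := fun _ : Fin n => volume.restrict (Set.Ioo (0:ℝ) 1)) (i := i)).eventually h0


noncomputable def dminF {N : ℕ} (hN : 2 ≤ N) (i : Fin N) (x : Fin N → ℝ) : ℝ :=
  (Finset.univ.erase i).inf' (erase_ne hN i) (fun j => |x i - x j|)

lemma dminF_nonneg {N : ℕ} (hN : 2 ≤ N) (i : Fin N) (x : Fin N → ℝ) :
    0 ≤ dminF hN i x :=
  Finset.le_inf' _ _ fun j _ => abs_nonneg _

lemma measurable_dminF {N : ℕ} (hN : 2 ≤ N) (i : Fin N) : Measurable (dminF hN i) :=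
  measurable_finset_inf' _ _ fun j => ((measurable_pi_apply i).sub (measurable_pi_apply j)).abs

lemma dminF_le_one {N : ℕ} (hN : 2 ≤ N) (i : Fin N) (x : Fin N → ℝ)
    (hx : ∀ j, x j ∈ Set.Ioo (0:ℝ) 1) : dminF hN i x ≤ 1 := by
  obtain ⟨j, hj⟩ := erase_ne hN i
  refine le_trans (Finset.inf'_le _ hj) ?_
  have h1 := hx i
  have h2 := hx j
  rw [Set.mem_Ioo] at h1 h2
  rw [abs_le]
  constructor <;> nlinarith [h1.1, h1.2, h2.1, h2.2]

lemma nnWeight_eq {N : ℕ} (hN : 2 ≤ N) (α : ℝ) (x : Fin N → ℝ) :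
    nnWeight α x = ∑ i : Fin N, dminF hN i x ^ α := by
  unfold nnWeight dminF
  refine Finset.sum_congr rfl fun i _ => ?_
  rw [sInf_eq_inf'_s15 hN]

lemma integrable_dpow {N : ℕ} (hN : 2 ≤ N) (α : ℝ) (hα : 0 < α) (i : Fin N) :
    Integrable (fun x => dminF hN i x ^ α) (unif N) := by
  refine ⟨((Real.continuous_rpow_const hα.le).measurable.comp (measurable_dminF hN i)).aestronglyMeasurable, ?_⟩
  refine MeasureTheory.HasFiniteIntegral.of_bounded (C := 1) ?_
  filter_upwards [unif_ae_mem N] with x hx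
  rw [Real.norm_eq_abs, abs_of_nonneg (Real.rpow_nonneg (dminF_nonneg hN i x) α)]
  exact Real.rpow_le_one (dminF_nonneg hN i x) (dminF_le_one hN i x hx) hα.le

lemma int_dmin_symm {N : ℕ} (hN : 2 ≤ N) (α : ℝ) (i k : Fin N) :
    ∫ x, dminF hN i x ^ α ∂unif N = ∫ x, dminF hN k x ^ α ∂unif N := by
  classical
  set e : (Fin N → ℝ) ≃ᵐ (Fin N → ℝ) :=
    MeasurableEquiv.arrowCongr' (Equiv.swap k i) (MeasurableEquiv.refl ℝ) with he
  have hmp : MeasurePreserving e (unif N) (unif N) :=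
    measurePreserving_arrowCongr' _ _ (Equiv.swap k i) (MeasurableEquiv.refl ℝ)
      (fun _ => MeasurePreserving.id _)
  have key : ∀ x : Fin N → ℝ, dminF hN k (e x) = dminF hN i x := by
    intro x
    have hex : ∀ j, e x j = x (Equiv.swap k i j) := by
      intro j
      simp [he, MeasurableEquiv.arrowCongr', Equiv.arrowCongr', Equiv.arrowCongr,
        Equiv.symm_symm, Equiv.swap_inv]
    unfold dminF
    simp only [hex]
    rw [show ((fun j => |x (Equiv.swap k i k) - x (Equiv.swap k i j)|))
        = (fun k => |x i - x k|) ∘ (Equiv.swap k i) by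
      funext j; simp [Equiv.swap_apply_left]]
    rw [← Finset.inf'_image (by
      rw [Finset.image_erase (Equiv.injective _), Finset.image_univ_equiv,
        Equiv.swap_apply_left]
      exact erase_ne hN i)]
    congr 1
    rw [Finset.image_erase (Equiv.injective _), Finset.image_univ_equiv, Equiv.swap_apply_left]
  calc ∫ x, dminF hN i x ^ α ∂unif N = ∫ x, dminF hN k (e x) ^ α ∂unif N := by
        simp_rw [key]
    _ = ∫ x, dminF hN k x ^ α ∂unif N := hmp.integral_comp' (fun y => dminF hN k y ^ α)


lemma meas_slice (s t : ℝ) (hs : 0 < s) (ht : t ∈ Set.Ioo (0:ℝ) 1) :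
    (volume.restrict (Set.Ioo (0:ℝ) 1)) {u : ℝ | s ≤ |t - u|}
      = ENNReal.ofReal (max (t - s) 0 + max (1 - t - s) 0) := by
  obtain ⟨ht0, ht1⟩ := ht
  have hSm : MeasurableSet {u : ℝ | s ≤ |t - u|} :=
    measurableSet_le measurable_const (continuous_abs.comp (continuous_const.sub continuous_id)).measurable
  rw [Measure.restrict_apply hSm]
  have hset : {u : ℝ | s ≤ |t - u|} ∩ Set.Ioo 0 1
      = (Set.Ioo 0 1 ∩ Set.Iic (t - s)) ∪ (Set.Ioo 0 1 ∩ Set.Ici (t + s)) := by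
    ext u
    simp only [Set.mem_inter_iff, Set.mem_setOf_eq, Set.mem_Ioo, Set.mem_union, Set.mem_Iic,
      Set.mem_Ici, le_abs]
    constructor
    · rintro ⟨h | h, hP⟩
      · exact Or.inl ⟨hP, by linarith⟩
      · exact Or.inr ⟨hP, by linarith⟩
    · rintro (⟨hP, h⟩ | ⟨hP, h⟩)
      · exact ⟨Or.inl (by linarith), hP⟩
      · exact ⟨Or.inr (by linarith), hP⟩
  rw [hset]
  have hdisj : Disjoint (Set.Ioo (0:ℝ) 1 ∩ Set.Iic (t - s)) (Set.Ioo (0:ℝ) 1 ∩ Set.Ici (t + s)) := by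
    refine Set.disjoint_left.2 ?_
    rintro u ⟨_, hu1⟩ ⟨_, hu2⟩
    simp only [Set.mem_Iic] at hu1
    simp only [Set.mem_Ici] at hu2
    linarith
  rw [measure_union hdisj (measurableSet_Ioo.inter measurableSet_Ici)]
  have h1 : volume (Set.Ioo (0:ℝ) 1 ∩ Set.Iic (t - s)) = ENNReal.ofReal (max (t - s) 0) := by
    rcases le_or_gt (t - s) 0 with h | h
    · have : Set.Ioo (0:ℝ) 1 ∩ Set.Iic (t - s) = ∅ := by
        ext u; simp only [Set.mem_inter_iff, Set.mem_Ioo, Set.mem_Iic, Set.mem_empty_iff_false,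
          iff_false, not_and]
        rintro ⟨hu0, _⟩ hu; linarith
      rw [this, max_eq_right h]
      simp
    · have : Set.Ioo (0:ℝ) 1 ∩ Set.Iic (t - s) = Set.Ioc 0 (t - s) := by
        ext u; simp only [Set.mem_inter_iff, Set.mem_Ioo, Set.mem_Iic, Set.mem_Ioc]
        constructor
        · rintro ⟨⟨h1, h2⟩, h3⟩; exact ⟨h1, h3⟩
        · rintro ⟨h1, h3⟩; exact ⟨⟨h1, by linarith⟩, h3⟩
      rw [this, Real.volume_Ioc, max_eq_left h.le, sub_zero]
  have h2 : volume (Set.Ioo (0:ℝ) 1 ∩ Set.Ici (t + s)) = ENNReal.ofReal (max (1 - t - s) 0) := by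
    rcases le_or_gt 1 (t + s) with h | h
    · have : Set.Ioo (0:ℝ) 1 ∩ Set.Ici (t + s) = ∅ := by
        ext u; simp only [Set.mem_inter_iff, Set.mem_Ioo, Set.mem_Ici, Set.mem_empty_iff_false,
          iff_false, not_and]
        rintro ⟨_, hu1⟩ hu; linarith
      rw [this, max_eq_right (by linarith)]
      simp
    · have : Set.Ioo (0:ℝ) 1 ∩ Set.Ici (t + s) = Set.Ico (t + s) 1 := by
        ext u; simp only [Set.mem_inter_iff, Set.mem_Ioo, Set.mem_Ici, Set.mem_Ico]
        constructor
        · rintro ⟨⟨h1, h2⟩, h3⟩; exact ⟨h3, h2⟩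
        · rintro ⟨h1, h2⟩; exact ⟨⟨by linarith, h2⟩, h1⟩
      rw [this, Real.volume_Ico, max_eq_left (by linarith)]
      ring_nf
  rw [h1, h2, ENNReal.ofReal_add (le_max_right _ _) (le_max_right _ _)]


lemma meas_tail {m : ℕ} (hN : 2 ≤ m + 1) (s : ℝ) (hs : 0 < s) :
    unif (m+1) {x | s ≤ dminF hN 0 x}
      = ∫⁻ t in Set.Ioo (0:ℝ) 1,
          ENNReal.ofReal ((max (t - s) 0 + max (1 - t - s) 0) ^ m) := by
  classical
  set μ₀ := volume.restrict (Set.Ioo (0:ℝ) 1) with hμ₀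
  set B : Set (ℝ × (Fin m → ℝ)) := {p | ∀ k : Fin m, s ≤ |p.1 - p.2 k|} with hB
  have hBm : MeasurableSet B := by
    rw [hB, Set.setOf_forall]
    refine MeasurableSet.iInter fun k => ?_
    have hc : Continuous fun p : ℝ × (Fin m → ℝ) => |p.1 - p.2 k| := by fun_prop
    exact measurableSet_le measurable_const hc.measurable
  have hA : {x : Fin (m+1) → ℝ | s ≤ dminF hN 0 x}
      = (MeasurableEquiv.piFinSuccAbove (fun _ : Fin (m+1) => ℝ) 0) ⁻¹' B := by
    ext x
    simp only [Set.mem_preimage, Set.mem_setOf_eq, MeasurableEquiv.piFinSuccAbove_apply, hB,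
      Fin.succAbove_zero, Set.mem_setOf_eq]
    rw [dminF, Finset.le_inf'_iff]
    constructor
    · intro h k
      exact h k.succ (Finset.mem_erase.2 ⟨Fin.succ_ne_zero k, Finset.mem_univ _⟩)
    · intro h j hj
      obtain ⟨k, rfl⟩ := Fin.eq_succ_of_ne_zero (Finset.mem_erase.1 hj).1
      exact h k
  have hmp := measurePreserving_piFinSuccAbove (fun _ : Fin (m+1) => μ₀) 0
  have step1 : unif (m+1) {x | s ≤ dminF hN 0 x}
      = (μ₀.prod (Measure.pi fun _ : Fin m => μ₀)) B := by
    rw [hA]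
    exact hmp.measure_preimage hBm.nullMeasurableSet
  rw [step1, Measure.prod_apply hBm]
  have step2 : ∀ t : ℝ, (Measure.pi fun _ : Fin m => μ₀) (Prod.mk t ⁻¹' B)
      = (μ₀ {u | s ≤ |t - u|}) ^ m := by
    intro t
    have : Prod.mk t ⁻¹' B = Set.pi Set.univ (fun _ : Fin m => {u | s ≤ |t - u|}) := by
      ext y; simp [hB, Set.mem_pi]
    rw [this, Measure.pi_pi]
    simp [Finset.prod_const, Finset.card_univ]
  simp_rw [step2]
  rw [hμ₀]
  refine setLIntegral_congr_fun measurableSet_Ioo (fun t ht => ?_)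
  rw [meas_slice s t hs ht, ← ENNReal.ofReal_pow (by positivity)]


lemma int_sub_pow (m : ℕ) (a b c : ℝ) :
    ∫ t in a..b, (t - c) ^ m = ((b - c) ^ (m+1) - (a - c) ^ (m+1)) / (m+1) := by
  have h := intervalIntegral.integral_comp_sub_right (a := a) (b := b) (fun u => u ^ m) c
  rw [h, integral_pow]

lemma int_sub_pow' (m : ℕ) (a b c : ℝ) :
    ∫ t in a..b, (c - t) ^ m = ((c - a) ^ (m+1) - (c - b) ^ (m+1)) / (m+1) := by
  have h := intervalIntegral.integral_comp_sub_left (a := a) (b := b) (fun u => u ^ m) c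
  rw [h, integral_pow]

lemma cont_F (s : ℝ) (m : ℕ) : Continuous fun t : ℝ => (max (t - s) 0 + max (1 - t - s) 0) ^ m := by
  fun_prop

lemma uIcc_sub01 {a b : ℝ} (h0 : 0 ≤ a) (h1 : a ≤ b) (h2 : b ≤ 1) :
    Set.uIcc a b ⊆ Set.uIcc (0:ℝ) 1 := by
  rw [Set.uIcc_of_le h1, Set.uIcc_of_le zero_le_one]
  exact Set.Icc_subset_Icc h0 h2

lemma Gval {m : ℕ} (hm : 1 ≤ m) (s : ℝ) (hs : 0 < s) :
    ∫ t in Set.Ioo (0:ℝ) 1, (max (t - s) 0 + max (1 - t - s) 0) ^ m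
      = (1 - 2/((m:ℝ)+1)) * (max (1 - 2*s) 0) ^ (m+1)
        + (2/((m:ℝ)+1)) * (max (1 - s) 0) ^ (m+1) := by
  have hm1 : ((m:ℝ) + 1) ≠ 0 := by positivity
  have hmne : m ≠ 0 := by omega
  have hIoo : ∫ t in Set.Ioo (0:ℝ) 1, (max (t - s) 0 + max (1 - t - s) 0) ^ m
      = ∫ t in (0:ℝ)..1, (max (t - s) 0 + max (1 - t - s) 0) ^ m := by
    rw [intervalIntegral.integral_of_le zero_le_one, integral_Ioc_eq_integral_Ioo]
  rw [hIoo]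
  rcases le_or_gt 1 s with hc1 | hc1
  · -- s ≥ 1 : everything is zero
    have key : ∀ t ∈ Set.uIcc (0:ℝ) 1, (max (t - s) 0 + max (1 - t - s) 0) ^ m = (0:ℝ) := by
      intro t ht
      rw [Set.uIcc_of_le zero_le_one, Set.mem_Icc] at ht
      rw [max_eq_right (by linarith), max_eq_right (by linarith), add_zero, zero_pow hmne]
    rw [intervalIntegral.integral_congr key]
    rw [max_eq_right (by linarith), max_eq_right (by linarith), zero_pow (by omega)]
    simp
  rcases le_or_gt (1/2 : ℝ) s with hc2 | hc2
  · -- 1/2 ≤ s < 1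
    have key : ∀ t ∈ Set.uIcc (0:ℝ) 1, (max (t - s) 0 + max (1 - t - s) 0) ^ m
        = max (t - s) 0 ^ m + max (1 - t - s) 0 ^ m := by
      intro t ht
      rw [Set.uIcc_of_le zero_le_one, Set.mem_Icc] at ht
      rcases le_or_gt t s with h | h
      · rw [max_eq_right (by linarith : t - s ≤ 0), zero_add, zero_pow hmne, zero_add]
      · rw [max_eq_right (show (1:ℝ) - t - s ≤ 0 by linarith), add_zero, zero_pow hmne, add_zero]
    rw [intervalIntegral.integral_congr key]
    have i1 : IntervalIntegrable (fun t : ℝ => max (t - s) 0 ^ m) volume 0 1 := by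
      apply Continuous.intervalIntegrable; fun_prop
    have i2 : IntervalIntegrable (fun t : ℝ => max (1 - t - s) 0 ^ m) volume 0 1 := by
      apply Continuous.intervalIntegrable; fun_prop
    rw [intervalIntegral.integral_add i1 i2]
    have i1a : IntervalIntegrable _ volume 0 s := i1.mono_set (uIcc_sub01 le_rfl (by linarith) hc1.le)
    have i1b : IntervalIntegrable _ volume s 1 := i1.mono_set (uIcc_sub01 (by linarith) hc1.le le_rfl)
    have i2a : IntervalIntegrable _ volume 0 (1-s) := i2.mono_set (uIcc_sub01 le_rfl (by linarith) (by linarith))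
    have i2b : IntervalIntegrable _ volume (1-s) 1 := i2.mono_set (uIcc_sub01 (by linarith) (by linarith) le_rfl)
    have v1 : ∫ t in (0:ℝ)..1, max (t - s) 0 ^ m = (1 - s) ^ (m+1) / (m+1) := by
      rw [← intervalIntegral.integral_add_adjacent_intervals (a := (0:ℝ)) (b := s) (c := 1)
        i1a i1b]
      have e1 : ∫ t in (0:ℝ)..s, max (t - s) 0 ^ m = 0 := by
        have h' : ∀ t ∈ Set.uIcc (0:ℝ) s, max (t - s) 0 ^ m = (fun _ => (0:ℝ)) t := by
          intro t ht
          rw [Set.uIcc_of_le (by linarith), Set.mem_Icc] at ht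
          simp only [max_eq_right (show t - s ≤ 0 by linarith), zero_pow hmne]
        rw [intervalIntegral.integral_congr h']; simp
      have e2 : ∫ t in s..(1:ℝ), max (t - s) 0 ^ m = (1 - s) ^ (m+1) / (m+1) := by
        have h' : ∀ t ∈ Set.uIcc s (1:ℝ), max (t - s) 0 ^ m = (fun t => (t - s) ^ m) t := by
          intro t ht
          rw [Set.uIcc_of_le (by linarith), Set.mem_Icc] at ht
          rw [max_eq_left (by linarith)]
        rw [intervalIntegral.integral_congr h', int_sub_pow]
        simp [zero_pow (show m + 1 ≠ 0 by omega)]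
      rw [e1, e2, zero_add]
    have v2 : ∫ t in (0:ℝ)..1, max (1 - t - s) 0 ^ m = (1 - s) ^ (m+1) / (m+1) := by
      rw [← intervalIntegral.integral_add_adjacent_intervals (a := (0:ℝ)) (b := 1 - s) (c := 1)
        i2a i2b]
      have e1 : ∫ t in (0:ℝ)..(1-s), max (1 - t - s) 0 ^ m = (1 - s) ^ (m+1) / (m+1) := by
        have h' : ∀ t ∈ Set.uIcc (0:ℝ) (1-s), max (1 - t - s) 0 ^ m
            = (fun t => ((1 - s) - t) ^ m) t := by
          intro t ht
          rw [Set.uIcc_of_le (by linarith), Set.mem_Icc] at ht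
          rw [max_eq_left (by linarith)]
          ring_nf
        rw [intervalIntegral.integral_congr h', int_sub_pow']
        simp [zero_pow (show m + 1 ≠ 0 by omega)]
      have e2 : ∫ t in (1-s:ℝ)..1, max (1 - t - s) 0 ^ m = 0 := by
        have h' : ∀ t ∈ Set.uIcc (1-s:ℝ) 1, max (1 - t - s) 0 ^ m = (fun _ => (0:ℝ)) t := by
          intro t ht
          rw [Set.uIcc_of_le (by linarith), Set.mem_Icc] at ht
          simp only [max_eq_right (show 1 - t - s ≤ 0 by linarith), zero_pow hmne]
        rw [intervalIntegral.integral_congr h']; simp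
      rw [e1, e2, add_zero]
    rw [v1, v2, max_eq_right (by linarith), max_eq_left (by linarith),
      zero_pow (show m + 1 ≠ 0 by omega)]
    ring
  · -- 0 < s < 1/2
    have hint : IntervalIntegrable (fun t : ℝ => (max (t - s) 0 + max (1 - t - s) 0) ^ m)
        volume 0 1 := (cont_F s m).intervalIntegrable 0 1
    have ha : IntervalIntegrable _ volume 0 s := hint.mono_set (uIcc_sub01 le_rfl hs.le (by linarith))
    have hb : IntervalIntegrable _ volume s 1 := hint.mono_set (uIcc_sub01 hs.le (by linarith) le_rfl)
    have hc : IntervalIntegrable _ volume s (1-s) := hint.mono_set (uIcc_sub01 hs.le (by linarith) (by linarith))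
    have hd : IntervalIntegrable _ volume (1-s) 1 := hint.mono_set (uIcc_sub01 (by linarith) (by linarith) le_rfl)
    rw [← intervalIntegral.integral_add_adjacent_intervals (a := (0:ℝ)) (b := s) (c := 1) ha hb,
      ← intervalIntegral.integral_add_adjacent_intervals (a := s) (b := 1 - s) (c := 1) hc hd]
    have e1 : ∫ t in (0:ℝ)..s, (max (t - s) 0 + max (1 - t - s) 0) ^ m
        = ((1 - s) ^ (m+1) - (1 - 2*s) ^ (m+1)) / (m+1) := by
      have h' : ∀ t ∈ Set.uIcc (0:ℝ) s, (max (t - s) 0 + max (1 - t - s) 0) ^ m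
          = (fun t => ((1 - s) - t) ^ m) t := by
        intro t ht
        rw [Set.uIcc_of_le (by linarith), Set.mem_Icc] at ht
        rw [max_eq_right (by linarith : t - s ≤ 0), max_eq_left (by linarith), zero_add]
        ring_nf
      rw [intervalIntegral.integral_congr h', int_sub_pow']
      ring_nf
    have e2 : ∫ t in s..(1-s:ℝ), (max (t - s) 0 + max (1 - t - s) 0) ^ m
        = (1 - 2*s) * (1 - 2*s) ^ m := by
      have h' : ∀ t ∈ Set.uIcc s (1-s:ℝ), (max (t - s) 0 + max (1 - t - s) 0) ^ m
          = (fun _ => (1 - 2*s) ^ m) t := by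
        intro t ht
        rw [Set.uIcc_of_le (by linarith), Set.mem_Icc] at ht
        rw [max_eq_left (by linarith), max_eq_left (by linarith)]
        ring_nf
      rw [intervalIntegral.integral_congr h', intervalIntegral.integral_const]
      simp only [smul_eq_mul]
      ring
    have e3 : ∫ t in (1-s:ℝ)..1, (max (t - s) 0 + max (1 - t - s) 0) ^ m
        = ((1 - s) ^ (m+1) - (1 - 2*s) ^ (m+1)) / (m+1) := by
      have h' : ∀ t ∈ Set.uIcc (1-s:ℝ) 1, (max (t - s) 0 + max (1 - t - s) 0) ^ m
          = (fun t => (t - s) ^ m) t := by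
        intro t ht
        rw [Set.uIcc_of_le (by linarith), Set.mem_Icc] at ht
        rw [max_eq_left (by linarith), max_eq_right (by linarith : 1 - t - s ≤ 0), add_zero]
      rw [intervalIntegral.integral_congr h', int_sub_pow]
      ring_nf
    rw [e1, e2, e3, max_eq_left (by linarith), max_eq_left (by linarith)]
    field_simp
    ring


lemma betaReal (β : ℝ) (hβ : 0 < β) (n : ℕ) :
    ∫ s in (0:ℝ)..1, s ^ (β - 1) * (1 - s) ^ n
      = Real.Gamma β * Real.Gamma (n + 1) / Real.Gamma (β + n + 1) := by
  have hv : (0:ℝ) < n + 1 := by positivity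
  have key := Complex.Gamma_mul_Gamma_eq_betaIntegral
    (s := (β : ℂ)) (t := ((n : ℝ) + 1 : ℂ)) (by simpa using hβ) (by
      simp only [Complex.add_re, Complex.ofReal_re, Complex.one_re]
      positivity)
  have hBeta : Complex.betaIntegral (β : ℂ) ((n : ℝ) + 1 : ℂ)
      = ((∫ s in (0:ℝ)..1, s ^ (β - 1) * (1 - s) ^ n : ℝ) : ℂ) := by
    rw [Complex.betaIntegral, ← intervalIntegral.integral_ofReal]
    refine intervalIntegral.integral_congr ?_
    intro x hx
    rw [Set.uIcc_of_le zero_le_one, Set.mem_Icc] at hx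
    push_cast
    rw [Complex.ofReal_cpow hx.1]
    have h2 : ((1 : ℂ) - x) ^ ((n : ℂ) + 1 - 1) = ((1 : ℂ) - x) ^ (n : ℕ) := by
      rw [show (n : ℂ) + 1 - 1 = (n : ℂ) by ring, Complex.cpow_natCast]
    rw [h2]
    push_cast
    ring
  rw [hBeta] at key
  have hΓ : ∀ x : ℝ, Complex.Gamma (x : ℂ) = (Real.Gamma x : ℂ) := fun x => Complex.Gamma_ofReal x
  have hcast1 : ((β : ℂ) + ((n : ℝ) + 1 : ℂ)) = ((β + n + 1 : ℝ) : ℂ) := by push_cast; ring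
  rw [hcast1, hΓ, hΓ, show (((n:ℝ) + 1 : ℂ)) = (((n:ℝ) + 1 : ℝ) : ℂ) by push_cast; ring, hΓ] at key
  have hne : Real.Gamma (β + n + 1) ≠ 0 :=
    (Real.Gamma_pos_of_pos (by positivity)).ne'
  have key2 : Real.Gamma β * Real.Gamma ((n:ℝ) + 1)
      = Real.Gamma (β + n + 1) * ∫ s in (0:ℝ)..1, s ^ (β - 1) * (1 - s) ^ n := by
    exact_mod_cast key
  rw [eq_div_iff hne]
  rw [key2]
  ring

lemma K1 (α : ℝ) (hα : 0 < α) (n : ℕ) :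
    ∫ s in (0:ℝ)..1, α * s ^ (α - 1) * (1 - s) ^ n
      = Real.Gamma (α + 1) * Real.Gamma (n + 1) / Real.Gamma (α + n + 1) := by
  have h : ∀ s : ℝ, α * s ^ (α-1) * (1-s)^n = α * (s ^ (α-1) * (1-s)^n) := fun s => by ring
  simp_rw [h]
  rw [intervalIntegral.integral_const_mul, betaReal α hα n, Real.Gamma_add_one hα.ne']
  ring

lemma intble_K (α : ℝ) (hα : 0 < α) (g : ℝ → ℝ) (hg : Continuous g) :
    IntervalIntegrable (fun s : ℝ => α * s ^ (α - 1) * g s) volume 0 1 := by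
  have h1 : IntervalIntegrable (fun s : ℝ => s ^ (α - 1)) volume 0 1 :=
    intervalIntegral.intervalIntegrable_rpow' (by linarith)
  have h2 := (h1.const_mul α).mul_continuousOn (hg.continuousOn)
  simpa [mul_assoc, mul_comm, mul_left_comm] using h2


lemma K2' (α : ℝ) (hα : 0 < α) (n : ℕ) (hn : n ≠ 0) :
    ∫ s in (0:ℝ)..1, s ^ (α - 1) * max (1 - 2*s) 0 ^ n
      = 2^(-α) * (Real.Gamma α * Real.Gamma (n + 1) / Real.Gamma (α + n + 1)) := by
  have h1 : IntervalIntegrable (fun s : ℝ => s ^ (α - 1)) volume 0 1 :=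
    intervalIntegral.intervalIntegrable_rpow' (by linarith)
  have hint : IntervalIntegrable (fun s : ℝ => s ^ (α - 1) * max (1 - 2*s) 0 ^ n) volume 0 1 :=
    h1.mul_continuousOn (by fun_prop)
  have hintA : IntervalIntegrable (fun s : ℝ => s ^ (α - 1) * max (1 - 2*s) 0 ^ n) volume 0 (1/2) := by
    apply hint.mono_set
    rw [Set.uIcc_of_le (by norm_num : (0:ℝ) ≤ 1/2), Set.uIcc_of_le zero_le_one]
    exact Set.Icc_subset_Icc le_rfl (by norm_num)
  have hintB : IntervalIntegrable (fun s : ℝ => s ^ (α - 1) * max (1 - 2*s) 0 ^ n)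
      volume (1/2) 1 := by
    apply hint.mono_set
    rw [Set.uIcc_of_le (by norm_num : (1/2:ℝ) ≤ 1), Set.uIcc_of_le zero_le_one]
    exact Set.Icc_subset_Icc (by norm_num) le_rfl
  rw [← intervalIntegral.integral_add_adjacent_intervals (a := (0:ℝ)) (b := 1/2) (c := 1)
    hintA hintB]
  have hB : ∫ s in (1/2:ℝ)..1, s ^ (α - 1) * max (1 - 2*s) 0 ^ n = 0 := by
    have h' : ∀ s ∈ Set.uIcc (1/2:ℝ) 1, s ^ (α - 1) * max (1 - 2*s) 0 ^ n = (fun _ => (0:ℝ)) s := by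
      intro s hscond
      rw [Set.uIcc_of_le (by norm_num : (1/2:ℝ) ≤ 1), Set.mem_Icc] at hscond
      rw [max_eq_right (by linarith), zero_pow hn, mul_zero]
    rw [intervalIntegral.integral_congr h']
    simp
  rw [hB, add_zero]
  -- substitution u = 2 s
  have hA : ∫ s in (0:ℝ)..(1/2), s ^ (α - 1) * max (1 - 2*s) 0 ^ n
      = ∫ s in (0:ℝ)..(1/2), (fun u : ℝ => (u/2) ^ (α - 1) * max (1 - u) 0 ^ n) (2 * s) := by
    refine intervalIntegral.integral_congr fun s hscond => ?_
    simp only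
    rw [show 2 * s / 2 = s by ring, show (1:ℝ) - 2 * s = 1 - 2*s by ring]
  rw [hA, intervalIntegral.integral_comp_mul_left
    (fun u : ℝ => (u/2) ^ (α - 1) * max (1 - u) 0 ^ n) two_ne_zero]
  norm_num
  have hA2 : ∫ u in (0:ℝ)..1, (u/2) ^ (α - 1) * max (1 - u) 0 ^ n
      = ∫ u in (0:ℝ)..1, ((2:ℝ)^(α-1))⁻¹ * (u ^ (α - 1) * (1 - u) ^ n) := by
    refine intervalIntegral.integral_congr fun u hu => ?_
    rw [Set.uIcc_of_le zero_le_one, Set.mem_Icc] at hu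
    rw [Real.div_rpow hu.1 (by norm_num : (0:ℝ) ≤ 2), max_eq_left (by linarith)]
    field_simp
  rw [hA2, intervalIntegral.integral_const_mul, betaReal α hα n]
  have h2 : (2:ℝ)⁻¹ * (((2:ℝ)^(α-1))⁻¹ * (Real.Gamma α * Real.Gamma (n + 1) / Real.Gamma (α + n + 1)))
      = 2^(-α) * (Real.Gamma α * Real.Gamma (n + 1) / Real.Gamma (α + n + 1)) := by
    have : (2:ℝ)⁻¹ * ((2:ℝ)^(α-1))⁻¹ = 2^(-α) := by
      rw [← Real.rpow_neg_one (2:ℝ), ← Real.rpow_neg (by norm_num : (0:ℝ) ≤ 2),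
        ← Real.rpow_add (by norm_num : (0:ℝ) < 2)]
      ring_nf
    rw [← mul_assoc, this]
  rw [one_div]
  exact h2

noncomputable def gfun (m : ℕ) (s : ℝ) : ℝ :=
  (1 - 2/((m:ℝ)+1)) * (max (1 - 2*s) 0) ^ (m+1) + (2/((m:ℝ)+1)) * (max (1 - s) 0) ^ (m+1)

lemma coef_nonneg {m : ℕ} (hm : 1 ≤ m) : (0:ℝ) ≤ 1 - 2/((m:ℝ)+1) := by
  have h2 : (2:ℝ) ≤ (m:ℝ) + 1 := by
    have : (1:ℝ) ≤ (m:ℝ) := by exact_mod_cast hm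
    linarith
  rw [sub_nonneg, div_le_one (by positivity)]
  exact h2

lemma gfun_nonneg {m : ℕ} (hm : 1 ≤ m) (s : ℝ) : 0 ≤ gfun m s := by
  unfold gfun
  have := coef_nonneg (m := m) hm
  positivity

lemma gfun_zero {m : ℕ} (s : ℝ) (hs : 1 ≤ s) : gfun m s = 0 := by
  unfold gfun
  rw [max_eq_right (by linarith), max_eq_right (by linarith), zero_pow (Nat.succ_ne_zero m)]
  ring

lemma meas_tail' {m : ℕ} (hm : 1 ≤ m) (hN : 2 ≤ m + 1) (s : ℝ) (hs : 0 < s) :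
    unif (m+1) {x | s ≤ dminF hN 0 x} = ENNReal.ofReal (gfun m s) := by
  rw [meas_tail hN s hs]
  have hInt : IntegrableOn (fun t : ℝ => (max (t - s) 0 + max (1 - t - s) 0) ^ m)
      (Set.Ioo 0 1) volume :=
    ((cont_F s m).integrableOn_Icc (a := 0) (b := 1)).mono_set Set.Ioo_subset_Icc_self
  rw [← ofReal_integral_eq_lintegral_ofReal hInt
    (Filter.Eventually.of_forall fun t => by positivity)]
  rw [Gval hm s hs]
  rfl

lemma int_dmin_val {m : ℕ} (hm : 1 ≤ m) (hN : 2 ≤ m + 1) (α : ℝ) (hα : 0 < α) :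
    ∫ x, dminF hN 0 x ^ α ∂unif (m+1)
      = ((1 - 2/((m:ℝ)+1)) * 2^(-α) + 2/((m:ℝ)+1))
          * (Real.Gamma (α+1) * Real.Gamma ((m+1:ℕ) + 1) / Real.Gamma (α + (m+1:ℕ) + 1)) := by
  set μ := unif (m+1) with hμ
  have f_nn : 0 ≤ᵐ[μ] dminF hN 0 := Filter.Eventually.of_forall (dminF_nonneg hN 0)
  have f_mble : AEMeasurable (dminF hN 0) μ := (measurable_dminF hN 0).aemeasurable
  have key := MeasureTheory.lintegral_rpow_eq_lintegral_meas_le_mul μ f_nn f_mble hα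
  have hInt : Integrable (fun x => dminF hN 0 x ^ α) μ := integrable_dpow hN α hα 0
  have hL : ENNReal.ofReal (∫ x, dminF hN 0 x ^ α ∂μ)
      = ∫⁻ x, ENNReal.ofReal (dminF hN 0 x ^ α) ∂μ :=
    ofReal_integral_eq_lintegral_ofReal hInt
      (Filter.Eventually.of_forall fun x => Real.rpow_nonneg (dminF_nonneg hN 0 x) α)
  set h : ℝ → ℝ := fun t => t ^ (α - 1) * gfun m t with hh
  have hR : ∫⁻ t in Set.Ioi (0:ℝ), μ {a | t ≤ dminF hN 0 a} * ENNReal.ofReal (t ^ (α-1))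
      = ∫⁻ t in Set.Ioi (0:ℝ), ENNReal.ofReal (h t) := by
    refine setLIntegral_congr_fun measurableSet_Ioi (fun t ht => ?_)
    rw [hμ, meas_tail' hm hN t ht, ← ENNReal.ofReal_mul (gfun_nonneg hm t), hh]
    simp only
    rw [mul_comm (gfun m t) _]
  have h1 : IntervalIntegrable (fun s : ℝ => s ^ (α - 1)) volume 0 1 :=
    intervalIntegral.intervalIntegrable_rpow' (by linarith)
  have hIi : IntervalIntegrable h volume 0 1 := by
    rw [hh]
    exact h1.mul_continuousOn (Continuous.continuousOn (by unfold gfun; fun_prop))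
  have hIoc : IntegrableOn h (Set.Ioc 0 1) volume := hIi.1
  have hzero : Set.EqOn h (fun _ => (0:ℝ)) (Set.Ioi 1) := by
    intro t ht
    rw [Set.mem_Ioi] at ht
    simp only [hh, gfun_zero t ht.le, mul_zero]
  have hIoi1 : IntegrableOn h (Set.Ioi 1) volume :=
    (integrableOn_congr_fun hzero measurableSet_Ioi).2 (integrableOn_zero)
  have hunion : Set.Ioc (0:ℝ) 1 ∪ Set.Ioi 1 = Set.Ioi 0 := Set.Ioc_union_Ioi_eq_Ioi zero_le_one
  have hIoi : IntegrableOn h (Set.Ioi 0) volume := by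
    rw [← hunion]; exact hIoc.union hIoi1
  have h_nn_ae : 0 ≤ᵐ[volume.restrict (Set.Ioi (0:ℝ))] h := by
    filter_upwards [self_mem_ae_restrict (measurableSet_Ioi : MeasurableSet (Set.Ioi (0:ℝ)))]
      with t ht
    have ht' : (0:ℝ) ≤ t := (Set.mem_Ioi.1 ht).le
    rw [hh]
    have := gfun_nonneg (m := m) hm t
    positivity
  have hR2 : ∫⁻ t in Set.Ioi (0:ℝ), ENNReal.ofReal (h t)
      = ENNReal.ofReal (∫ t in Set.Ioi (0:ℝ), h t) :=
    (ofReal_integral_eq_lintegral_ofReal hIoi h_nn_ae).symm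
  have hsplit : ∫ t in Set.Ioi (0:ℝ), h t = ∫ t in (0:ℝ)..1, h t := by
    rw [← hunion, setIntegral_union (Set.Ioc_disjoint_Ioi le_rfl) measurableSet_Ioi hIoc hIoi1,
      setIntegral_congr_fun measurableSet_Ioi hzero, integral_zero, add_zero,
      intervalIntegral.integral_of_le zero_le_one]
  have int2a : IntervalIntegrable (fun t : ℝ => t ^ (α-1) * max (1 - 2*t) 0 ^ (m+1)) volume 0 1 :=
    h1.mul_continuousOn (Continuous.continuousOn (by fun_prop))
  have int2b : IntervalIntegrable (fun t : ℝ => t ^ (α-1) * (1 - t) ^ (m+1)) volume 0 1 :=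
    h1.mul_continuousOn (Continuous.continuousOn (by fun_prop))
  have hexp : ∫ t in (0:ℝ)..1, h t
      = (1 - 2/((m:ℝ)+1)) * (∫ t in (0:ℝ)..1, t ^ (α-1) * max (1 - 2*t) 0 ^ (m+1))
        + (2/((m:ℝ)+1)) * (∫ t in (0:ℝ)..1, t ^ (α-1) * (1 - t) ^ (m+1)) := by
    have e : ∀ t ∈ Set.uIcc (0:ℝ) 1, h t
        = (fun t => (1 - 2/((m:ℝ)+1)) * (t ^ (α-1) * max (1 - 2*t) 0 ^ (m+1))
            + (2/((m:ℝ)+1)) * (t ^ (α-1) * (1 - t) ^ (m+1))) t := by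
      intro t ht
      rw [Set.uIcc_of_le zero_le_one, Set.mem_Icc] at ht
      simp only [hh]
      unfold gfun
      rw [max_eq_left (by linarith : (0:ℝ) ≤ 1 - t)]
      ring
    rw [intervalIntegral.integral_congr e,
      intervalIntegral.integral_add (int2a.const_mul _) (int2b.const_mul _),
      intervalIntegral.integral_const_mul, intervalIntegral.integral_const_mul]
  have hval : ∫ t in (0:ℝ)..1, h t
      = ((1 - 2/((m:ℝ)+1)) * 2^(-α) + 2/((m:ℝ)+1))
          * (Real.Gamma α * Real.Gamma ((m+1:ℕ) + 1) / Real.Gamma (α + (m+1:ℕ) + 1)) := by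
    rw [hexp, K2' α hα (m+1) (Nat.succ_ne_zero m), betaReal α hα (m+1)]
    ring
  -- combine everything
  have hcomb : ENNReal.ofReal (∫ x, dminF hN 0 x ^ α ∂μ)
      = ENNReal.ofReal (α * (((1 - 2/((m:ℝ)+1)) * 2^(-α) + 2/((m:ℝ)+1))
          * (Real.Gamma α * Real.Gamma ((m+1:ℕ) + 1) / Real.Gamma (α + (m+1:ℕ) + 1)))) := by
    rw [hL, key, hR, hR2, hsplit, hval, ← ENNReal.ofReal_mul hα.le]
  have hXpos : (0:ℝ) < Real.Gamma α * Real.Gamma ((m+1:ℕ) + 1) / Real.Gamma (α + (m+1:ℕ) + 1) := by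
    have g1 := Real.Gamma_pos_of_pos hα
    have g2 := Real.Gamma_pos_of_pos (show (0:ℝ) < ((m+1:ℕ):ℝ) + 1 by positivity)
    have g3 := Real.Gamma_pos_of_pos (show (0:ℝ) < α + ((m+1:ℕ):ℝ) + 1 by positivity)
    positivity
  have hrhs_nn : 0 ≤ α * (((1 - 2/((m:ℝ)+1)) * 2^(-α) + 2/((m:ℝ)+1))
      * (Real.Gamma α * Real.Gamma ((m+1:ℕ) + 1) / Real.Gamma (α + (m+1:ℕ) + 1))) := by
    have := coef_nonneg (m := m) hm
    positivity
  have hfin := (ENNReal.ofReal_eq_ofReal_iff (integral_nonneg fun x =>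
    Real.rpow_nonneg (dminF_nonneg hN 0 x) α) hrhs_nn).1 hcomb
  rw [hfin, Real.Gamma_add_one hα.ne']
  ring


lemma prodGamma (α : ℝ) (hα : 0 < α) (n : ℕ) :
    ∏ j ∈ Finset.range (n+1), (α + j) = Real.Gamma (α + n + 1) / Real.Gamma α := by
  have hΓα : Real.Gamma α ≠ 0 := (Real.Gamma_pos_of_pos hα).ne'
  induction n with
  | zero =>
    simp only [zero_add, Finset.range_one, Finset.prod_singleton, Nat.cast_zero, add_zero, Nat.cast_zero]
    rw [Real.Gamma_add_one hα.ne']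
    field_simp
  | succ n ih =>
    rw [Finset.prod_range_succ, ih]
    have hpos : (0:ℝ) < α + n + 1 := by positivity
    rw [show α + ((n:ℕ)+1:ℕ) + 1 = (α + n + 1) + 1 by push_cast; ring,
      Real.Gamma_add_one hpos.ne']
    field_simp
    push_cast
    ring

lemma tendsto_v (α : ℝ) (hα : 0 < α) :
    Tendsto (fun n : ℕ => (n:ℝ)^α * Real.Gamma ((n:ℝ)+1) / Real.Gamma ((n:ℝ)+α+1))
      atTop (𝓝 1) := by
  have hΓα : Real.Gamma α ≠ 0 := (Real.Gamma_pos_of_pos hα).ne'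
  have h := (Real.GammaSeq_tendsto_Gamma α).div_const (Real.Gamma α)
  rw [div_self hΓα] at h
  refine h.congr' ?_
  filter_upwards [eventually_ge_atTop 1] with n hn
  rw [Real.GammaSeq, prodGamma α hα n]
  have hg1 : Real.Gamma (α + n + 1) ≠ 0 := (Real.Gamma_pos_of_pos (by positivity)).ne'
  have hfac : ((n.factorial : ℕ) : ℝ) = Real.Gamma ((n:ℝ)+1) := (Real.Gamma_nat_eq_factorial n).symm
  rw [hfac, show (n:ℝ)+α+1 = α+(n:ℝ)+1 by ring]
  field_simp

lemma tendsto_u (α : ℝ) :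
    Tendsto (fun n : ℕ => (((n:ℝ)-2) * 2^(-α) + 2)/(2^(-α) * (n:ℝ))) atTop (𝓝 1) := by
  have hc : (0:ℝ) < 2^(-α) := Real.rpow_pos_of_pos two_pos _
  have base : Tendsto (fun n : ℕ => 1 + ((2 - 2*2^(-α))/2^(-α)) * (1/(n:ℝ)))
      atTop (𝓝 (1 + ((2 - 2*2^(-α))/2^(-α)) * 0)) :=
    tendsto_const_nhds.add (tendsto_const_nhds.mul tendsto_one_div_atTop_nhds_zero_nat)
  rw [mul_zero, add_zero] at base
  refine base.congr' ?_
  filter_upwards [eventually_ge_atTop 1] with n hn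
  have hn0 : (n:ℝ) ≠ 0 := by
    have : (1:ℝ) ≤ (n:ℝ) := by exact_mod_cast hn
    linarith
  field_simp
  ring


/-- For `n ≥ 2` and `α > 0`, the expected total `α`-power-weighted length of the
nearest-neighbour directed graph on `n` i.i.d. uniform points on `(0,1)` equals
`((n-2)·2^(-α) + 2)·Γ(n+1)Γ(α+1)/Γ(n+α+1)`, which is asymptotic to
`2^(-α)Γ(α+1)·n^(1-α)` as `n → ∞`. -/
theorem nn_expected_weight (α : ℝ) (hα : 0 < α) :
    (∀ n : ℕ, 2 ≤ n →
      ∫ u, nnWeight α u ∂(unif n)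
        = (((n:ℝ) - 2) * (2:ℝ)^(-α) + 2) * Real.Gamma ((n:ℝ)+1) * Real.Gamma (α+1)
            / Real.Gamma ((n:ℝ)+α+1))
    ∧ (fun n : ℕ => ∫ u, nnWeight α u ∂(unif n))
        ~[Filter.atTop] fun n : ℕ => (2:ℝ)^(-α) * Real.Gamma (α+1) * (n:ℝ)^(1-α) := by
  have exact_formula : ∀ n : ℕ, 2 ≤ n → ∫ u, nnWeight α u ∂(unif n)
      = (((n:ℝ) - 2) * (2:ℝ)^(-α) + 2) * Real.Gamma ((n:ℝ)+1) * Real.Gamma (α+1)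
          / Real.Gamma ((n:ℝ)+α+1) := by
    intro n hn
    obtain ⟨m, rfl⟩ : ∃ m, n = m + 1 := ⟨n - 1, by omega⟩
    have hm : 1 ≤ m := by omega
    have hN : 2 ≤ m + 1 := hn
    have h0 : ∫ u, nnWeight α u ∂(unif (m+1))
        = ∑ i : Fin (m+1), ∫ x, dminF hN i x ^ α ∂(unif (m+1)) := by
      rw [← integral_finset_sum _ (fun i _ => integrable_dpow hN α hα i)]
      refine integral_congr_ae (Filter.Eventually.of_forall fun x => ?_)
      rw [nnWeight_eq hN α x]
    rw [h0, Finset.sum_congr rfl (fun i _ => int_dmin_symm hN α i 0), Finset.sum_const,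
      Finset.card_univ, Fintype.card_fin, nsmul_eq_mul, int_dmin_val hm hN α hα]
    have hg : Real.Gamma (α + ((m+1:ℕ):ℝ) + 1) ≠ 0 :=
      (Real.Gamma_pos_of_pos (by positivity)).ne'
    have hn1 : ((m:ℝ)+1) ≠ 0 := by positivity
    push_cast at hg ⊢
    rw [show ((m:ℝ)+1)+α+1 = α+((m:ℝ)+1)+1 by ring]
    field_simp
  refine ⟨exact_formula, ?_⟩
  have hc : (0:ℝ) < 2^(-α) := Real.rpow_pos_of_pos two_pos _
  have hΓ : (0:ℝ) < Real.Gamma (α+1) := Real.Gamma_pos_of_pos (by positivity)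
  have hRT : (fun n : ℕ => (((n:ℝ) - 2) * (2:ℝ)^(-α) + 2) * Real.Gamma ((n:ℝ)+1)
        * Real.Gamma (α+1) / Real.Gamma ((n:ℝ)+α+1))
      ~[Filter.atTop] (fun n : ℕ => (2:ℝ)^(-α) * Real.Gamma (α+1) * (n:ℝ)^(1-α)) := by
    rw [isEquivalent_iff_tendsto_one (by
      filter_upwards [eventually_ge_atTop 1] with n hn
      have hnpos : (0:ℝ) < (n:ℝ) := by exact_mod_cast Nat.lt_of_lt_of_le Nat.zero_lt_one hn
      have hr : (0:ℝ) < (n:ℝ)^(1-α) := Real.rpow_pos_of_pos hnpos _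
      positivity)]
    have hlim := (tendsto_u α).mul (tendsto_v α hα)
    rw [mul_one] at hlim
    refine hlim.congr' ?_
    filter_upwards [eventually_ge_atTop 1] with n hn
    have hnpos : (0:ℝ) < (n:ℝ) := by exact_mod_cast Nat.lt_of_lt_of_le Nat.zero_lt_one hn
    have hna : (0:ℝ) < (n:ℝ)^α := Real.rpow_pos_of_pos hnpos _
    have hrp : (n:ℝ)^(1-α) = (n:ℝ) / (n:ℝ)^α := by
      rw [eq_div_iff hna.ne', ← Real.rpow_add hnpos]
      rw [show 1-α+α = (1:ℝ) by ring, Real.rpow_one]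
    have hgn : Real.Gamma ((n:ℝ)+α+1) ≠ 0 := (Real.Gamma_pos_of_pos (by positivity)).ne'
    simp only [Pi.div_apply]
    rw [hrp]
    field_simp
  have hEq : (fun n : ℕ => ∫ u, nnWeight α u ∂(unif n))
      =ᶠ[Filter.atTop] (fun n : ℕ => (((n:ℝ) - 2) * (2:ℝ)^(-α) + 2) * Real.Gamma ((n:ℝ)+1)
        * Real.Gamma (α+1) / Real.Gamma ((n:ℝ)+α+1)) := by
    filter_upwards [eventually_ge_atTop 2] with n hn using exact_formula n hn
  exact hEq.trans_isEquivalent hRT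
end

section
/- Let U be uniform on (0,1) and, given U, let N(n) ~ Binomial(n-1, U). Then as n → ∞, U(log⁺N(n) − log n) converges in L² to U log U, where log⁺x = max{log x, 0}. -/
open MeasureTheory

section Aux

open Real Finset

private lemma neg_log_le_two_div_sqrt' {u : ℝ} (h0 : 0 < u) : -Real.log u ≤ 2 / Real.sqrt u := by
  have hs : 0 < Real.sqrt u := Real.sqrt_pos.2 h0
  have h1 : Real.log (1 / Real.sqrt u) ≤ 1 / Real.sqrt u - 1 :=
    Real.log_le_sub_one_of_pos (by positivity)
  have h2 : Real.log u = 2 * Real.log (Real.sqrt u) := by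
    conv_lhs => rw [← Real.sq_sqrt h0.le]
    rw [Real.log_pow]; push_cast; ring
  rw [Real.log_div one_ne_zero hs.ne', Real.log_one] at h1
  rw [h2]
  have h3 : (2:ℝ) / Real.sqrt u = 2 * (1 / Real.sqrt u) := by ring
  rw [h3]
  nlinarith [Real.sqrt_nonneg u]

private lemma mul_log_sq_le' {u : ℝ} (h0 : 0 < u) (h1 : u ≤ 1) : u * (Real.log u)^2 ≤ 4 := by
  have h2 := neg_log_le_two_div_sqrt' h0
  have hs : 0 < Real.sqrt u := Real.sqrt_pos.2 h0
  have hlu : Real.log u ≤ 0 := Real.log_nonpos h0.le h1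
  have h3 : (-Real.log u)^2 ≤ (2 / Real.sqrt u)^2 := by
    apply pow_le_pow_left₀ (by linarith) h2
  have h4 : (2 / Real.sqrt u)^2 = 4 / u := by
    rw [div_pow, Real.sq_sqrt h0.le]; norm_num
  have h5 : (Real.log u)^2 ≤ 4 / u := by rw [← h4]; simpa [neg_sq] using h3
  calc u * (Real.log u)^2 ≤ u * (4/u) := by apply mul_le_mul_of_nonneg_left h5 h0.le
    _ = 4 := by field_simp

private lemma log_sq_le_four_mul' {a : ℝ} (h0 : 0 < a) (h : 1/2 ≤ a) :
    (Real.log a)^2 ≤ 4*(a-1)^2 := by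
  rcases le_or_gt 1 a with ha | ha
  · have h1 : 0 ≤ Real.log a := Real.log_nonneg ha
    have h2 : Real.log a ≤ a - 1 := Real.log_le_sub_one_of_pos h0
    nlinarith
  · have h1 : Real.log a ≤ 0 := Real.log_nonpos h0.le ha.le
    have h2 : Real.log (1/a) ≤ 1/a - 1 := Real.log_le_sub_one_of_pos (by positivity)
    rw [Real.log_div one_ne_zero h0.ne', Real.log_one] at h2
    have h3 : 1/a - 1 ≤ 2*(1-a) := by
      rw [div_sub_one h0.ne', div_le_iff₀ h0]; nlinarith
    nlinarith

private lemma bernstein_eval' (m k : ℕ) (u : ℝ) :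
    (bernsteinPolynomial ℝ m k).eval u = (m.choose k : ℝ) * u^k * (1-u)^(m-k) := by
  simp [bernsteinPolynomial]

private lemma binom_sum_one' (m : ℕ) (u : ℝ) :
    ∑ k ∈ range (m+1), (m.choose k : ℝ) * u^k * (1-u)^(m-k) = 1 := by
  have := congrArg (Polynomial.eval u) (bernsteinPolynomial.sum ℝ m)
  simpa [Polynomial.eval_finset_sum, bernstein_eval'] using this

private lemma binom_sum_k' (m : ℕ) (u : ℝ) :
    ∑ k ∈ range (m+1), (k:ℝ) * ((m.choose k : ℝ) * u^k * (1-u)^(m-k)) = m * u := by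
  have := congrArg (Polynomial.eval u) (bernsteinPolynomial.sum_smul ℝ m)
  simpa [Polynomial.eval_finset_sum, bernstein_eval', mul_comm] using this

private lemma binom_var' (m : ℕ) (u : ℝ) :
    ∑ k ∈ range (m+1), ((m:ℝ)*u - k)^2 * ((m.choose k : ℝ) * u^k * (1-u)^(m-k))
      = m * u * (1-u) := by
  have := congrArg (Polynomial.eval u) (bernsteinPolynomial.variance ℝ m)
  simpa [Polynomial.eval_finset_sum, bernstein_eval'] using this

private lemma binom_var_shift' (m : ℕ) (u : ℝ) :
    ∑ k ∈ range (m+1), (m.choose k : ℝ) * u^k * (1-u)^(m-k) * ((k:ℝ) - (m+1)*u)^2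
      = m * u * (1-u) + u^2 := by
  have e : ∀ k ∈ range (m+1), (m.choose k : ℝ) * u^k * (1-u)^(m-k) * ((k:ℝ) - (m+1)*u)^2
      = ((m:ℝ)*u - k)^2 * ((m.choose k : ℝ) * u^k * (1-u)^(m-k))
        + (-2*u) * ((k:ℝ) * ((m.choose k : ℝ) * u^k * (1-u)^(m-k)))
        + (2*m*u^2 + u^2) * ((m.choose k : ℝ) * u^k * (1-u)^(m-k)) := by
    intro k _; ring
  rw [Finset.sum_congr rfl e]
  rw [Finset.sum_add_distrib, Finset.sum_add_distrib, ← Finset.mul_sum, ← Finset.mul_sum,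
    binom_var', binom_sum_k', binom_sum_one']
  ring

private lemma D_bound' (n k : ℕ) (hn : 1 ≤ n) (hk : k < n) {u : ℝ} (h0 : 0 < u) (h1 : u < 1) :
    (max (Real.log k) 0 - Real.log n - Real.log u)^2
      ≤ (4 + 8*(Real.log n)^2 + 8*(Real.log u)^2) * (((k:ℝ) - n*u)^2 / ((n:ℝ)*u)^2) := by
  have hn0 : (0:ℝ) < n := by exact_mod_cast hn
  have ht : (0:ℝ) < (n:ℝ)*u := by positivity
  have hlogt : Real.log ((n:ℝ)*u) = Real.log n + Real.log u :=
    Real.log_mul hn0.ne' h0.ne'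
  set t : ℝ := (n:ℝ)*u with htdef
  by_cases hcase : |(k:ℝ) - t| ≤ t/2
  · obtain ⟨hc1, hc2⟩ := abs_le.1 hcase
    have hkt : t/2 ≤ (k:ℝ) := by linarith
    have hkpos : (0:ℝ) < k := by linarith
    have hk0 : k ≠ 0 := by
      rintro rfl; norm_num at hkpos
    have hk1 : (1:ℝ) ≤ (k:ℝ) := by exact_mod_cast Nat.one_le_iff_ne_zero.2 hk0
    have hmax : max (Real.log k) 0 = Real.log k := max_eq_left (Real.log_nonneg hk1)
    have hD : max (Real.log k) 0 - Real.log n - Real.log u = Real.log ((k:ℝ)/t) := by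
      rw [hmax, Real.log_div (by positivity) ht.ne', hlogt]; ring
    have ha0 : (0:ℝ) < (k:ℝ)/t := by positivity
    have ha12 : 1/2 ≤ (k:ℝ)/t := by
      rw [le_div_iff₀ ht]; linarith
    have hsq := log_sq_le_four_mul' ha0 ha12
    have hkey : ((k:ℝ)/t - 1)^2 = ((k:ℝ)-t)^2/t^2 := by
      field_simp
    rw [hD]
    have hA : (0:ℝ) ≤ 8*(Real.log n)^2 + 8*(Real.log u)^2 := by positivity
    have hnn : (0:ℝ) ≤ ((k:ℝ)-t)^2/t^2 := by positivity
    nlinarith [hsq, hkey]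
  · have h14 : t^2/4 ≤ ((k:ℝ)-t)^2 := by
      have hlt := not_le.1 hcase
      have h2 : (t/2)^2 < |(k:ℝ)-t|^2 := by
        apply pow_lt_pow_left₀ hlt (by positivity)
        norm_num
      rw [sq_abs] at h2; nlinarith
    have hlogn0 : 0 ≤ Real.log n := Real.log_nonneg (by exact_mod_cast hn)
    have hmaxle : max (Real.log k) 0 ≤ Real.log n := by
      apply max_le _ hlogn0
      rcases Nat.eq_zero_or_pos k with rfl | hk0
      · simpa using hlogn0
      · exact Real.log_le_log (by exact_mod_cast hk0) (by exact_mod_cast hk.le)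
    have hmax0 : 0 ≤ max (Real.log k) 0 := le_max_right _ _
    have hlu : Real.log u < 0 := Real.log_neg h0 h1
    have hDsq : (max (Real.log k) 0 - Real.log n - Real.log u)^2
        ≤ (Real.log n)^2 + (Real.log u)^2 := by
      nlinarith [hmax0, hmaxle, hlu]
    have hA4 : (1:ℝ) + 2*(Real.log n)^2 + 2*(Real.log u)^2
        ≤ (4 + 8*(Real.log n)^2 + 8*(Real.log u)^2) * (((k:ℝ)-t)^2 / t^2) := by
      have hq : (1:ℝ)/4 ≤ ((k:ℝ)-t)^2 / t^2 := by
        rw [le_div_iff₀ (by positivity)]; nlinarith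
      have hApos : (0:ℝ) < 4 + 8*(Real.log n)^2 + 8*(Real.log u)^2 := by positivity
      calc (1:ℝ) + 2*(Real.log n)^2 + 2*(Real.log u)^2
          = (4 + 8*(Real.log n)^2 + 8*(Real.log u)^2) * (1/4) := by ring
        _ ≤ _ := by
            apply mul_le_mul_of_nonneg_left hq hApos.le
    nlinarith [hDsq, hA4, sq_nonneg (Real.log n), sq_nonneg (Real.log u)]

private lemma key_pointwise' (n : ℕ) (hn : 1 ≤ n) {u : ℝ} (h0 : 0 < u) (h1 : u < 1) :
    ∑ k ∈ range n, ((n-1).choose k : ℝ) * u^k * (1-u)^(n-1-k)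
        * (u * (max (Real.log k) 0 - Real.log n) - u * Real.log u)^2
      ≤ (36 + 8*(Real.log n)^2)/n := by
  obtain ⟨m, rfl⟩ : ∃ m, n = m + 1 := ⟨n - 1, (Nat.succ_pred_eq_of_pos hn).symm⟩
  set A : ℝ := 4 + 8*(Real.log (m+1:ℕ))^2 + 8*(Real.log u)^2 with hA
  have hApos : 0 < A := by positivity
  have hn0 : (0:ℝ) < ((m+1:ℕ):ℝ) := by positivity
  have step1 : ∀ k ∈ range (m+1),
      (m.choose k : ℝ) * u^k * (1-u)^(m-k)
        * (u * (max (Real.log k) 0 - Real.log (m+1:ℕ)) - u * Real.log u)^2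
      ≤ A/((m+1:ℕ):ℝ)^2 * ((m.choose k : ℝ) * u^k * (1-u)^(m-k) * ((k:ℝ) - (m+1)*u)^2) := by
    intro k hk
    have h1u : (0:ℝ) ≤ 1 - u := by linarith
    have hb : (0:ℝ) ≤ (m.choose k : ℝ) * u^k * (1-u)^(m-k) :=
      mul_nonneg (mul_nonneg (Nat.cast_nonneg _) (by positivity)) (pow_nonneg h1u _)
    have hD := D_bound' (m+1) k (Nat.le_add_left 1 m) (mem_range.1 hk) h0 h1
    have he : (u * (max (Real.log k) 0 - Real.log (m+1:ℕ)) - u * Real.log u)^2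
        = u^2 * (max (Real.log k) 0 - Real.log (m+1:ℕ) - Real.log u)^2 := by ring
    rw [he]
    have h2 : u^2 * (max (Real.log k) 0 - Real.log (m+1:ℕ) - Real.log u)^2
        ≤ u^2 * (A * (((k:ℝ) - (m+1:ℕ)*u)^2 / (((m+1:ℕ):ℝ)*u)^2)) :=
      mul_le_mul_of_nonneg_left hD (by positivity)
    have h3 : u^2 * (A * (((k:ℝ) - (m+1:ℕ)*u)^2 / (((m+1:ℕ):ℝ)*u)^2))
        = A/((m+1:ℕ):ℝ)^2 * ((k:ℝ) - (m+1)*u)^2 := by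
      have hcast : ((m+1:ℕ):ℝ) = (m:ℝ)+1 := by push_cast; ring
      rw [hcast]
      field_simp
    calc (m.choose k : ℝ) * u^k * (1-u)^(m-k)
          * (u^2 * (max (Real.log k) 0 - Real.log (m+1:ℕ) - Real.log u)^2)
        ≤ (m.choose k : ℝ) * u^k * (1-u)^(m-k)
          * (A/((m+1:ℕ):ℝ)^2 * ((k:ℝ) - (m+1)*u)^2) := by
          apply mul_le_mul_of_nonneg_left _ hb
          rw [← h3]; exact h2
      _ = A/((m+1:ℕ):ℝ)^2 * ((m.choose k : ℝ) * u^k * (1-u)^(m-k) * ((k:ℝ) - (m+1)*u)^2) := by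
          ring
  calc ∑ k ∈ range (m+1), (m.choose k : ℝ) * u^k * (1-u)^(m-k)
        * (u * (max (Real.log k) 0 - Real.log (m+1:ℕ)) - u * Real.log u)^2
      ≤ ∑ k ∈ range (m+1), A/((m+1:ℕ):ℝ)^2
          * ((m.choose k : ℝ) * u^k * (1-u)^(m-k) * ((k:ℝ) - (m+1)*u)^2) :=
        Finset.sum_le_sum step1
    _ = A/((m+1:ℕ):ℝ)^2 * (m * u * (1-u) + u^2) := by
        rw [← Finset.mul_sum, binom_var_shift']
    _ ≤ A/((m+1:ℕ):ℝ)^2 * (((m+1:ℕ):ℝ) * u) := by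
        apply mul_le_mul_of_nonneg_left _ (by positivity)
        push_cast
        nlinarith
    _ = A * u / ((m+1:ℕ):ℝ) := by
        field_simp
    _ ≤ (36 + 8*(Real.log (m+1:ℕ))^2)/((m+1:ℕ):ℝ) := by
        have hAu : A * u ≤ 36 + 8*(Real.log (m+1:ℕ))^2 := by
          have hm := mul_log_sq_le' h0 h1.le
          have hsqn : (0:ℝ) ≤ (Real.log (m+1:ℕ))^2 := sq_nonneg _
          have hsqu : (0:ℝ) ≤ (Real.log u)^2 := sq_nonneg _
          rw [hA]
          nlinarith
        gcongr

private lemma G_bound' (c u : ℝ) (h0 : 0 < u) (h1 : u < 1) :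
    |(u*c - u*Real.log u)^2| ≤ (|c|+2)^2 := by
  have hlu : Real.log u < 0 := Real.log_neg h0 h1
  have hsu1 : Real.sqrt u ≤ 1 := by
    rw [show (1:ℝ) = Real.sqrt 1 from (Real.sqrt_one).symm]
    exact Real.sqrt_le_sqrt h1.le
  have h2 : u * (-Real.log u) ≤ 2 := by
    calc u * (-Real.log u) ≤ u * (2 / Real.sqrt u) :=
          mul_le_mul_of_nonneg_left (neg_log_le_two_div_sqrt' h0) h0.le
      _ = 2 * (u / Real.sqrt u) := by ring
      _ = 2 * Real.sqrt u := by rw [Real.div_sqrt]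
      _ ≤ 2 := by linarith
  have habs : |u*c - u*Real.log u| ≤ |c| + 2 := by
    calc |u*c - u*Real.log u| ≤ |u*c| + |u*Real.log u| := abs_sub _ _
      _ = u*|c| + u*(-Real.log u) := by
          rw [abs_mul, abs_mul, abs_of_pos h0, abs_of_neg hlu]
      _ ≤ |c| + 2 := by
          have : u * |c| ≤ |c| := by nlinarith [abs_nonneg c]
          linarith
  calc |(u*c - u*Real.log u)^2| = |u*c - u*Real.log u|^2 := by rw [abs_pow]
    _ ≤ (|c|+2)^2 := pow_le_pow_left₀ (abs_nonneg _) habs 2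

end Aux

section MeasAux

open scoped NNReal ENNReal

private lemma nullMeasurableSet_of_add_le' {Ω : Type*} [MeasurableSpace Ω] {P : Measure Ω}
    [IsProbabilityMeasure P] {t : Set Ω} (h : P t + P tᶜ ≤ 1) :
    NullMeasurableSet t P := by
  set H := toMeasurable P t with hH
  set H' := toMeasurable P tᶜ with hH'
  have hHt : t ⊆ H := subset_toMeasurable _ _
  have hH't : tᶜ ⊆ H' := subset_toMeasurable _ _
  have hHm : MeasurableSet H := measurableSet_toMeasurable _ _
  have hH'm : MeasurableSet H' := measurableSet_toMeasurable _ _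
  have hunion : H ∪ H' = Set.univ := by
    apply Set.eq_univ_of_univ_subset
    calc Set.univ = t ∪ tᶜ := (Set.union_compl_self t).symm
      _ ⊆ H ∪ H' := Set.union_subset_union hHt hH't
  have hsum : P H + P H' ≤ 1 := by
    rw [measure_toMeasurable, measure_toMeasurable]; exact h
  have hinter : P (H ∩ H') = 0 := by
    have h2 := measure_union_add_inter H hH'm (μ := P)
    rw [hunion, measure_univ] at h2
    have h3 : 1 + P (H ∩ H') ≤ 1 := by rw [h2]; exact hsum
    have h4 := ENNReal.add_le_add_iff_left (a := 1) (by norm_num) |>.mp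
      (by simpa using h3 : 1 + P (H ∩ H') ≤ 1 + 0)
    exact le_antisymm h4 zero_le
  have hdiff : P (H \ t) = 0 := by
    apply measure_mono_null _ hinter
    intro x hx
    exact ⟨hx.1, hH't (hx.2 : x ∉ t)⟩
  apply hHm.nullMeasurableSet.congr
  rw [Filter.eventuallyEq_set]
  have : ∀ᵐ x ∂P, x ∉ H \ t := by
    rw [ae_iff]; simp only [not_not]; exact hdiff
  filter_upwards [this] with x hx
  constructor
  · intro hxH; by_contra hxt; exact hx ⟨hxH, hxt⟩
  · intro hxt; exact hHt hxt

private lemma indicator_integral' {Ω : Type*} [MeasurableSpace Ω] (P : Measure Ω)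
    [IsProbabilityMeasure P]
    (U : Ω → ℝ) (hU : AEMeasurable U P) (hUIoo : ∀ᵐ ω ∂P, U ω ∈ Set.Ioo (0:ℝ) 1)
    (E : Set Ω) (hE : NullMeasurableSet E P) (β G : ℝ → ℝ)
    (hβcont : Continuous β) (hβnn : ∀ u ∈ Set.Ioo (0:ℝ) 1, 0 ≤ β u)
    (hlaw : ∀ s : Set ℝ, MeasurableSet s →
      P (U ⁻¹' s ∩ E) = ENNReal.ofReal (∫ u in s ∩ Set.Ioo (0:ℝ) 1, β u))
    (hG : Measurable G) (C : ℝ) (hGbd : ∀ u ∈ Set.Ioo (0:ℝ) 1, |G u| ≤ C) :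
    Integrable (E.indicator (fun ω => G (U ω))) P ∧
    ∫ ω, E.indicator (fun ω => G (U ω)) ω ∂P = ∫ u in Set.Ioo (0:ℝ) 1, β u * G u := by
  have hC0 : 0 ≤ C := le_trans (abs_nonneg _) (hGbd (1/2) (by norm_num))
  set H := toMeasurable P E with hHdef
  have hHm : MeasurableSet H := measurableSet_toMeasurable _ _
  have hHE : H =ᵐ[P] E := hE.toMeasurable_ae_eq
  have hind : E.indicator (fun ω => G (U ω)) =ᵐ[P] H.indicator (fun ω => G (U ω)) := by
    filter_upwards [hHE] with ω hω
    have h2 : (ω ∈ H) = (ω ∈ E) := hω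
    by_cases hmem : ω ∈ E
    · rw [Set.indicator_of_mem hmem, Set.indicator_of_mem ((iff_of_eq h2).mpr hmem)]
    · rw [Set.indicator_of_notMem hmem,
        Set.indicator_of_notMem (fun hh => hmem ((iff_of_eq h2).mp hh))]
  have hβint : IntegrableOn β (Set.Ioo (0:ℝ) 1) volume :=
    (hβcont.integrableOn_Icc (a := 0) (b := 1)).mono_set Set.Ioo_subset_Icc_self
  have hmap : Measure.map U (P.restrict H)
      = (volume.restrict (Set.Ioo (0:ℝ) 1)).withDensity (fun u => ENNReal.ofReal (β u)) := by
    ext s hs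
    rw [Measure.map_apply_of_aemeasurable (hU.restrict) hs, Measure.restrict_apply' hHm]
    have h1 : (U ⁻¹' s ∩ H : Set Ω) =ᵐ[P] (U ⁻¹' s ∩ E : Set Ω) :=
      ae_eq_set_inter (Filter.EventuallyEq.refl _ _) hHE
    rw [measure_congr h1, hlaw s hs, withDensity_apply _ hs, Measure.restrict_restrict hs]
    rw [ofReal_integral_eq_lintegral_ofReal
      (hβint.mono_set Set.inter_subset_right)
      ((ae_restrict_iff' (hs.inter measurableSet_Ioo)).2
        (Filter.Eventually.of_forall fun u hu => hβnn u hu.2))]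
  have hGsm : AEStronglyMeasurable G (Measure.map U (P.restrict H)) :=
    hG.aestronglyMeasurable
  have hval : ∫ ω, E.indicator (fun ω => G (U ω)) ω ∂P = ∫ u in Set.Ioo (0:ℝ) 1, β u * G u := by
    rw [integral_congr_ae hind, integral_indicator hHm, ← integral_map hU.restrict hGsm, hmap]
    have hofReal : (fun u => ENNReal.ofReal (β u))
        = fun u => ((Real.toNNReal (β u) : ℝ≥0) : ℝ≥0∞) := rfl
    rw [hofReal, integral_withDensity_eq_integral_smul (hβcont.measurable.real_toNNReal) G]
    apply setIntegral_congr_fun measurableSet_Ioo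
    intro u hu
    simp [NNReal.smul_def, Real.coe_toNNReal _ (hβnn u hu)]
  refine ⟨?_, hval⟩
  have hsm : AEStronglyMeasurable (E.indicator (fun ω => G (U ω))) P :=
    (((hG.comp_aemeasurable hU).aestronglyMeasurable).indicator hHm).congr hind.symm
  apply Integrable.mono' (integrable_const C) hsm
  filter_upwards [hUIoo] with ω hω
  by_cases hmem : ω ∈ E
  · simp only [Set.indicator_of_mem hmem]
    exact hGbd _ hω
  · simp [Set.indicator_of_notMem hmem, hC0]

end MeasAux

/-- Let `U` be uniform on `(0,1)` and, conditionally on `U`, let `N(n)` be binomial with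
parameters `n-1` and `U` (expressed through the joint law of `(U, N(n))`). Then
`U(log⁺ N(n) - log n)` converges in `L²` to `U log U` as `n → ∞`, where
`log⁺ x = max{log x, 0}`. -/
theorem ulog_binomial_L2_convergence {Ω : Type*} [MeasurableSpace Ω] (P : Measure Ω)
    [IsProbabilityMeasure P] (U : Ω → ℝ) (N : ℕ → Ω → ℕ)
    (h : ∀ n : ℕ, 1 ≤ n → ∀ s : Set ℝ, MeasurableSet s → ∀ k : ℕ,
      P {ω | U ω ∈ s ∧ N n ω = k}
        = ENNReal.ofReal (∫ u in s ∩ Set.Ioo (0:ℝ) 1,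
            ((n-1).choose k : ℝ) * u^k * (1-u)^(n-1-k))) :
    Filter.Tendsto
      (fun n : ℕ => ∫ ω,
        (U ω * (max (Real.log (N n ω)) 0 - Real.log n) - U ω * Real.log (U ω))^2 ∂P)
      Filter.atTop (nhds 0) := by
  classical
  set bd : ℕ → ℕ → ℝ → ℝ := fun n k u => ((n-1).choose k : ℝ) * u^k * (1-u)^(n-1-k) with hbd
  set E : ℕ → ℕ → Set Ω := fun n k => {ω | N n ω = k} with hEdef
  have hlaw : ∀ n, 1 ≤ n → ∀ k, ∀ s : Set ℝ, MeasurableSet s →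
      P (U ⁻¹' s ∩ E n k) = ENNReal.ofReal (∫ u in s ∩ Set.Ioo (0:ℝ) 1, bd n k u) := by
    intro n hn k s hs
    exact h n hn s hs k
  have hbcont : ∀ n k, Continuous (bd n k) := by
    intro n k
    simp only [hbd]
    exact (continuous_const.mul (continuous_pow k)).mul
      ((continuous_const.sub continuous_id).pow _)
  have hbnn : ∀ n k, ∀ u ∈ Set.Ioo (0:ℝ) 1, 0 ≤ bd n k u := by
    intro n k u hu
    have h1u : (0:ℝ) ≤ 1 - u := by linarith [hu.2]
    exact mul_nonneg (mul_nonneg (Nat.cast_nonneg _) (pow_nonneg hu.1.le _)) (pow_nonneg h1u _)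
  have hbint : ∀ n k, IntegrableOn (bd n k) (Set.Ioo (0:ℝ) 1) volume := fun n k =>
    ((hbcont n k).integrableOn_Icc (a := 0) (b := 1)).mono_set Set.Ioo_subset_Icc_self
  have hp : ∀ n, 1 ≤ n → ∀ k,
      P (E n k) = ENNReal.ofReal (∫ u in Set.Ioo (0:ℝ) 1, bd n k u) := by
    intro n hn k
    have := hlaw n hn k Set.univ MeasurableSet.univ
    simpa using this
  have hpzero : ∀ n, 1 ≤ n → ∀ k, n ≤ k → P (E n k) = 0 := by
    intro n hn k hk
    rw [hp n hn k]
    have hz : ∀ u : ℝ, bd n k u = 0 := by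
      intro u; simp only [hbd]
      rw [Nat.choose_eq_zero_of_lt (by omega)]
      simp
    simp [hz]
  have hint_sum : ∀ n, 1 ≤ n →
      ∑ k ∈ Finset.range n, ∫ u in Set.Ioo (0:ℝ) 1, bd n k u = 1 := by
    intro n hn
    rw [← integral_finset_sum _ (fun k _ => hbint n k)]
    have hone : ∀ u : ℝ, ∑ k ∈ Finset.range n, bd n k u = 1 := by
      intro u
      have hm : n - 1 + 1 = n := Nat.succ_pred_eq_of_pos hn
      have := binom_sum_one' (n-1) u
      rw [hm] at this
      simpa [hbd] using this
    simp only [hone]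
    simp [Real.volume_Ioo]
  have htsum : ∀ n, 1 ≤ n → ∑' k, P (E n k) = 1 := by
    intro n hn
    rw [tsum_eq_sum (s := Finset.range n)
      (fun k hk => hpzero n hn k (le_of_not_gt (fun hlt => hk (Finset.mem_range.2 hlt))))]
    rw [Finset.sum_congr rfl (fun k _ => hp n hn k)]
    rw [← ENNReal.ofReal_sum_of_nonneg
      (fun k _ => setIntegral_nonneg measurableSet_Ioo (fun u hu => hbnn n k u hu))]
    rw [hint_sum n hn]
    simp
  have hplus : ∀ n, 1 ≤ n → ∀ k, P (E n k) + P ((E n k)ᶜ) ≤ 1 := by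
    intro n hn k
    have hsub : (E n k)ᶜ ⊆ ⋃ j, (fun j => if j = k then (∅ : Set Ω) else E n j) j := by
      intro ω hω
      have hj : N n ω ≠ k := hω
      refine Set.mem_iUnion.2 ⟨N n ω, ?_⟩
      simp only [if_neg hj]
      exact rfl
    have h1 : P ((E n k)ᶜ) ≤ ∑' j, P (if j = k then (∅ : Set Ω) else E n j) :=
      le_trans (measure_mono hsub) (measure_iUnion_le _)
    have h2 : ∀ j, P (if j = k then (∅ : Set Ω) else E n j)
        = if j = k then 0 else P (E n j) := by
      intro j; split_ifs <;> simp
    rw [tsum_congr h2] at h1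
    calc P (E n k) + P ((E n k)ᶜ)
        ≤ P (E n k) + ∑' j, (if j = k then 0 else P (E n j)) := add_le_add le_rfl h1
      _ = ∑' j, P (E n j) := by
          rw [ENNReal.tsum_eq_add_tsum_ite (f := fun j => P (E n j)) k]
          congr 1
          apply tsum_congr
          intro j
          by_cases hj : j = k <;> simp [hj]
      _ = 1 := htsum n hn
  have hnull : ∀ n, 1 ≤ n → ∀ k, NullMeasurableSet (E n k) P := fun n hn k =>
    nullMeasurableSet_of_add_le' (hplus n hn k)
  have honeb : ∀ u : ℝ, bd 1 0 u = 1 := by intro u; simp [hbd]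
  have hE10 : P (E 1 0) = 1 := by
    rw [hp 1 le_rfl 0]
    simp only [honeb]
    simp [Real.volume_Ioo]
  have hE10c : P ((E 1 0)ᶜ) = 0 := by
    have h5 := hplus 1 le_rfl 0
    rw [hE10] at h5
    have h4 := (ENNReal.add_le_add_iff_left (a := (1:ENNReal)) (by norm_num)).mp
      (show (1:ENNReal) + P ((E 1 0)ᶜ) ≤ 1 + 0 by simpa using h5)
    exact le_antisymm h4 zero_le
  have hUnif : ∀ s : Set ℝ, MeasurableSet s → P (U ⁻¹' s) = volume (s ∩ Set.Ioo 0 1) := by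
    intro s hs
    have hval : P (U ⁻¹' s ∩ E 1 0) = volume (s ∩ Set.Ioo 0 1) := by
      rw [hlaw 1 le_rfl 0 s hs]
      simp only [honeb]
      rw [setIntegral_const]
      have hfin : volume (s ∩ Set.Ioo (0:ℝ) 1) ≠ ⊤ := by
        apply ne_top_of_le_ne_top _ (measure_mono Set.inter_subset_right)
        simp [Real.volume_Ioo]
      simp [Measure.real, ENNReal.ofReal_toReal hfin]
    apply le_antisymm
    · calc P (U ⁻¹' s)
          ≤ P ((U ⁻¹' s ∩ E 1 0) ∪ (E 1 0)ᶜ) := by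
            apply measure_mono
            intro ω hω
            by_cases hm : ω ∈ E 1 0
            · exact Or.inl ⟨hω, hm⟩
            · exact Or.inr hm
        _ ≤ P (U ⁻¹' s ∩ E 1 0) + P ((E 1 0)ᶜ) := measure_union_le _ _
        _ = volume (s ∩ Set.Ioo 0 1) := by rw [hval, hE10c, add_zero]
    · rw [← hval]; exact measure_mono Set.inter_subset_left
  have hU : AEMeasurable U P := by
    apply MeasureTheory.NullMeasurable.aemeasurable
    intro s hs
    apply nullMeasurableSet_of_add_le'
    rw [hUnif s hs, ← Set.preimage_compl, hUnif sᶜ hs.compl]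
    have hsplit : volume (s ∩ Set.Ioo (0:ℝ) 1) + volume (sᶜ ∩ Set.Ioo (0:ℝ) 1)
        = volume (Set.Ioo (0:ℝ) 1) := by
      rw [Set.inter_comm, Set.inter_comm sᶜ]
      rw [show Set.Ioo (0:ℝ) 1 ∩ sᶜ = Set.Ioo (0:ℝ) 1 \ s from rfl]
      exact measure_inter_add_diff _ hs
    rw [hsplit]
    simp [Real.volume_Ioo]
  have hUIoo : ∀ᵐ ω ∂P, U ω ∈ Set.Ioo (0:ℝ) 1 := by
    rw [ae_iff]
    have hre : {ω | ¬ U ω ∈ Set.Ioo (0:ℝ) 1} = U ⁻¹' (Set.Ioo (0:ℝ) 1)ᶜ := rfl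
    rw [hre, hUnif _ measurableSet_Ioo.compl]
    simp
  have hNlt : ∀ n, 1 ≤ n → ∀ᵐ ω ∂P, N n ω < n := by
    intro n hn
    rw [ae_iff]
    have hsub : {ω | ¬ N n ω < n} ⊆ ⋃ j, (fun j => if j < n then (∅ : Set Ω) else E n j) j := by
      intro ω hω
      refine Set.mem_iUnion.2 ⟨N n ω, ?_⟩
      simp only [if_neg (show ¬ N n ω < n from hω)]
      exact rfl
    refine le_antisymm (le_trans (measure_mono hsub) ?_) zero_le
    refine le_trans (measure_iUnion_le _) ?_
    have hz : ∀ j, P (if j < n then (∅ : Set Ω) else E n j) = 0 := by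
      intro j
      split_ifs with hj
      · simp
      · exact hpzero n hn j (le_of_not_gt hj)
    rw [tsum_congr hz]
    simp
  have hbound : ∀ n, 1 ≤ n →
      (∫ ω, (U ω * (max (Real.log (N n ω)) 0 - Real.log n) - U ω * Real.log (U ω))^2 ∂P)
        ≤ (36 + 8*(Real.log n)^2)/n := by
    intro n hn
    set G : ℕ → ℝ → ℝ :=
      fun k u => (u * (max (Real.log k) 0 - Real.log n) - u * Real.log u)^2 with hGdef
    have hGmeas : ∀ k, Measurable (G k) := by
      intro k
      apply Measurable.pow_const
      exact (measurable_id.mul_const _).sub (measurable_id.mul Real.measurable_log)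
    have hGbd : ∀ k, ∀ u ∈ Set.Ioo (0:ℝ) 1,
        |G k u| ≤ (|max (Real.log k) 0 - Real.log n| + 2)^2 := by
      intro k u hu
      exact G_bound' _ u hu.1 hu.2
    have hcomp : ∀ k, Integrable ((E n k).indicator (fun ω => G k (U ω))) P ∧
        ∫ ω, (E n k).indicator (fun ω => G k (U ω)) ω ∂P
          = ∫ u in Set.Ioo (0:ℝ) 1, bd n k u * G k u :=
      fun k => indicator_integral' P U hU hUIoo (E n k) (hnull n hn k) (bd n k) (G k)
        (hbcont n k) (fun u hu => hbnn n k u hu) (fun s hs => hlaw n hn k s hs) (hGmeas k)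
        _ (hGbd k)
    have hae : (fun ω =>
        (U ω * (max (Real.log (N n ω)) 0 - Real.log n) - U ω * Real.log (U ω))^2)
        =ᵐ[P] (fun ω => ∑ k ∈ Finset.range n, (E n k).indicator (fun ω' => G k (U ω')) ω) := by
      filter_upwards [hNlt n hn] with ω hω
      rw [Finset.sum_eq_single_of_mem (N n ω) (Finset.mem_range.2 hω)]
      · rw [Set.indicator_of_mem (show ω ∈ E n (N n ω) from rfl)]
      · intro j _ hj
        apply Set.indicator_of_notMem
        intro hh
        exact hj (Eq.symm (hh : N n ω = j))
    have hbGint : ∀ k, IntegrableOn (fun u => bd n k u * G k u) (Set.Ioo (0:ℝ) 1) volume := by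
      intro k
      apply Integrable.mono'
        (g := fun _ => ((n-1).choose k : ℝ) * (|max (Real.log k) 0 - Real.log n| + 2)^2)
        (integrable_const _)
      · exact ((hbcont n k).measurable.mul (hGmeas k)).aestronglyMeasurable
      · rw [ae_restrict_iff' measurableSet_Ioo]
        apply Filter.Eventually.of_forall
        intro u hu
        have h1 : |bd n k u| ≤ ((n-1).choose k : ℝ) := by
          rw [abs_of_nonneg (hbnn n k u hu)]
          simp only [hbd]
          have hu1 : u^k ≤ 1 := pow_le_one₀ hu.1.le hu.2.le
          have hu2 : (1-u)^(n-1-k) ≤ 1 := pow_le_one₀ (by linarith [hu.2]) (by linarith [hu.1])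
          have hc0 : (0:ℝ) ≤ ((n-1).choose k : ℝ) := Nat.cast_nonneg _
          have hp1 : (0:ℝ) ≤ u^k := pow_nonneg hu.1.le k
          have hp2 : (0:ℝ) ≤ (1-u)^(n-1-k) := pow_nonneg (by linarith [hu.2]) _
          calc ((n-1).choose k : ℝ) * u^k * (1-u)^(n-1-k)
              ≤ ((n-1).choose k : ℝ) * u^k := by nlinarith [mul_nonneg hc0 hp1]
            _ ≤ ((n-1).choose k : ℝ) := by nlinarith
        calc |bd n k u * G k u| = |bd n k u| * |G k u| := abs_mul _ _
          _ ≤ ((n-1).choose k : ℝ) * (|max (Real.log k) 0 - Real.log n| + 2)^2 :=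
              mul_le_mul h1 (hGbd k u hu) (abs_nonneg _) (Nat.cast_nonneg _)
    calc ∫ ω, (U ω * (max (Real.log (N n ω)) 0 - Real.log n) - U ω * Real.log (U ω))^2 ∂P
        = ∑ k ∈ Finset.range n, ∫ ω, (E n k).indicator (fun ω' => G k (U ω')) ω ∂P := by
          rw [integral_congr_ae hae]
          exact integral_finset_sum _ (fun k _ => (hcomp k).1)
      _ = ∑ k ∈ Finset.range n, ∫ u in Set.Ioo (0:ℝ) 1, bd n k u * G k u :=
          Finset.sum_congr rfl (fun k _ => (hcomp k).2)
      _ = ∫ u in Set.Ioo (0:ℝ) 1, ∑ k ∈ Finset.range n, bd n k u * G k u :=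
          (integral_finset_sum _ (fun k _ => hbGint k)).symm
      _ ≤ ∫ u in Set.Ioo (0:ℝ) 1, (36 + 8*(Real.log n)^2)/n := by
          apply setIntegral_mono_on (integrable_finset_sum _ (fun k _ => hbGint k))
            (integrableOn_const (by simp [Real.volume_Ioo])) measurableSet_Ioo
          intro u hu
          have := key_pointwise' n hn hu.1 hu.2
          simpa [hbd, hGdef] using this
      _ = (36 + 8*(Real.log n)^2)/n := by
          rw [setIntegral_const]
          simp [Real.volume_Ioo]
  apply squeeze_zero' (g := fun n : ℕ => (36 + 8*(Real.log n)^2)/n)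
  · exact Filter.Eventually.of_forall (fun n => integral_nonneg (fun ω => sq_nonneg _))
  · filter_upwards [Filter.eventually_ge_atTop 1] with n hn using hbound n hn
  · have h1 : Filter.Tendsto (fun x : ℝ => (36 + 8*(Real.log x)^2)/x)
        Filter.atTop (nhds 0) := by
      have h36 : Filter.Tendsto (fun x : ℝ => 36/x) Filter.atTop (nhds (0:ℝ)) :=
        Filter.Tendsto.div_atTop tendsto_const_nhds Filter.tendsto_id
      have hlog := Real.tendsto_pow_log_div_mul_add_atTop 1 0 2 one_ne_zero
      have hlog' : Filter.Tendsto (fun x : ℝ => 8*(Real.log x ^ 2/x))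
          Filter.atTop (nhds (8*0)) := by
        apply Filter.Tendsto.const_mul
        simpa using hlog
      have hadd := h36.add hlog'
      rw [show (0:ℝ) + 8*0 = 0 by ring] at hadd
      apply hadd.congr
      intro x
      rw [add_div]
      ring
    have h2 := h1.comp (tendsto_natCast_atTop_atTop (R := ℝ))
    exact h2
end
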